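/- arXiv:2103.16811 — 6 statements merged into one kernel-verified Lean document; each statement's English description precedes it below -/
import Mathlib

section
/- (Rothschild–van Lint) Let n ≥ 1 and 0 ≤ k ≤ n, and let f = 1_S be the indicator function of a set S ⊆ F_2^n with |S| = 2^{n−k}. If for every α ∈ F_2^n the absolute value |f̂(α)| is either 0 or 1/2^k, then S is an affine subspace of F_2^n of dimension n−k. -/
open Finset

/-- The Fourier coefficient `f̂(α) = E_x[f(x)·(-1)^⟨α,x⟩]` of `f : F_2^n → ℝ`. -/
noncomputable def fc {n : ℕ} (f : (Fin n → ZMod 2) → ℝ) (α : Fin n → ZMod 2) : ℝ :=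
  (∑ x : Fin n → ZMod 2, f x * (-1 : ℝ) ^ (∑ i, α i * x i : ZMod 2).val) / 2 ^ n

noncomputable def eps (a : ZMod 2) : ℝ := (-1 : ℝ) ^ a.val

lemma val11 : ZMod.val ((1:ZMod 2) + 1) = 0 := rfl
lemma val2 : ZMod.val (2 : ZMod 2) = 0 := rfl
lemma val1 : ZMod.val (1 : ZMod 2) = 1 := rfl

lemma eps_add (a b : ZMod 2) : eps (a + b) = eps a * eps b := by
  rcases (by decide : ∀ x : ZMod 2, x = 0 ∨ x = 1) a with rfl | rfl <;> rcases (by decide : ∀ x : ZMod 2, x = 0 ∨ x = 1) b with rfl | rfl <;> norm_num [eps, val11, val2, val1]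

lemma eps_le_one (a : ZMod 2) : eps a ≤ 1 := by rcases (by decide : ∀ x : ZMod 2, x = 0 ∨ x = 1) a with rfl | rfl <;> norm_num [eps, val1]

lemma eps_eq_one_iff (a : ZMod 2) : eps a = 1 ↔ a = 0 := by
  rcases (by decide : ∀ x : ZMod 2, x = 0 ∨ x = 1) a with rfl | rfl <;> norm_num [eps, val1]

lemma eps_sq (a : ZMod 2) : eps a * eps a = 1 := by rcases (by decide : ∀ x : ZMod 2, x = 0 ∨ x = 1) a with rfl | rfl <;> norm_num [eps, val1]

lemma abs_eps (a : ZMod 2) : |eps a| = 1 := by fin_cases a <;> norm_num [eps, val1]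

def ip {n : ℕ} (α x : Fin n → ZMod 2) : ZMod 2 := ∑ i, α i * x i

lemma ip_add_right {n : ℕ} (α x y : Fin n → ZMod 2) :
    ip α (x + y) = ip α x + ip α y := by
  simp [ip, mul_add, Finset.sum_add_distrib]

lemma zmod2_add_self (a : ZMod 2) : a + a = 0 := by fin_cases a <;> decide

lemma pi_add_self {n : ℕ} (x : Fin n → ZMod 2) : x + x = 0 := by
  funext i; exact zmod2_add_self _

lemma ip_add_left {n : ℕ} (α β x : Fin n → ZMod 2) :
    ip (α + β) x = ip α x + ip β x := by
  simp [ip, add_mul, Finset.sum_add_distrib]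

lemma zmod2_ne_zero (a : ZMod 2) (h : a ≠ 0) : a = 1 := by fin_cases a <;> [exact absurd rfl h; rfl]

lemma eps_one : eps 1 = -1 := by norm_num [eps, val1]

lemma sum_eps_ip {n : ℕ} (z : Fin n → ZMod 2) (hz : z ≠ 0) :
    ∑ α : Fin n → ZMod 2, eps (ip α z) = 0 := by
  obtain ⟨j, hj⟩ : ∃ j, z j ≠ 0 := by
    by_contra hc
    push_neg at hc
    exact hz (funext hc)
  have hzj : z j = 1 := zmod2_ne_zero _ hj
  set d : Fin n → ZMod 2 := Pi.single j 1 with hd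
  have hipd : ip d z = 1 := by
    simp [ip, hd, Pi.single_apply, ite_mul, hzj]
  have key : ∑ α : Fin n → ZMod 2, eps (ip α z)
      = ∑ α : Fin n → ZMod 2, eps (ip (α + d) z) :=
    (Fintype.sum_equiv (Equiv.addRight d) _ _ (fun α => rfl)).symm
  have : ∑ α : Fin n → ZMod 2, eps (ip (α + d) z)
      = -∑ α : Fin n → ZMod 2, eps (ip α z) := by
    rw [← Finset.sum_neg_distrib]
    refine Finset.sum_congr rfl fun α _ => ?_
    rw [ip_add_left, hipd, eps_add, eps_one]; ring
  linarith [key.trans this]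

lemma sum_eps_ip_zero {n : ℕ} :
    ∑ α : Fin n → ZMod 2, eps (ip α (0 : Fin n → ZMod 2)) = 2 ^ n := by
  simp [ip, eps]

lemma fc_eq {n : ℕ} (f : (Fin n → ZMod 2) → ℝ) (α : Fin n → ZMod 2) :
    fc f α = (∑ y : Fin n → ZMod 2, f y * eps (ip α y)) / 2 ^ n := rfl

lemma sum_eps_ite {n : ℕ} (y x : Fin n → ZMod 2) :
    ∑ α : Fin n → ZMod 2, eps (ip α (y + x)) = if y = x then (2:ℝ) ^ n else 0 := by
  by_cases hyx : y = x
  · subst hyx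
    rw [if_pos rfl, pi_add_self, sum_eps_ip_zero]
  · rw [if_neg hyx]
    apply sum_eps_ip
    intro hzero
    apply hyx
    have h := congrArg (· + x) hzero
    simpa [add_assoc, pi_add_self] using h

lemma inversion {n : ℕ} (f : (Fin n → ZMod 2) → ℝ) (x : Fin n → ZMod 2) :
    ∑ α : Fin n → ZMod 2, fc f α * eps (ip α x) = f x := by
  have h2n : ((2:ℝ) ^ n) ≠ 0 := by positivity
  calc ∑ α : Fin n → ZMod 2, fc f α * eps (ip α x)
      = (∑ α : Fin n → ZMod 2, ∑ y : Fin n → ZMod 2, f y * eps (ip α (y + x))) / 2 ^ n := by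
        rw [Finset.sum_div]
        refine Finset.sum_congr rfl fun α _ => ?_
        rw [fc_eq, div_mul_eq_mul_div, Finset.sum_mul]
        congr 1
        refine Finset.sum_congr rfl fun y _ => ?_
        rw [mul_assoc, ← eps_add, ← ip_add_right]
    _ = (∑ y : Fin n → ZMod 2, f y * ∑ α : Fin n → ZMod 2, eps (ip α (y + x))) / 2 ^ n := by
        rw [Finset.sum_comm]
        congr 1
        exact Finset.sum_congr rfl fun y _ => (Finset.mul_sum _ _ _).symm
    _ = f x := by
        have : ∀ y : Fin n → ZMod 2, f y * ∑ α : Fin n → ZMod 2, eps (ip α (y + x))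
            = if y = x then f y * 2 ^ n else 0 := fun y => by
          rw [sum_eps_ite]; split <;> simp
        rw [Finset.sum_congr rfl fun y _ => this y, Finset.sum_ite_eq' Finset.univ x,
          if_pos (Finset.mem_univ x), mul_div_assoc, div_self h2n, mul_one]

lemma parseval {n : ℕ} (f : (Fin n → ZMod 2) → ℝ) :
    ∑ α : Fin n → ZMod 2, fc f α ^ 2 = (∑ x : Fin n → ZMod 2, f x ^ 2) / 2 ^ n := by
  calc ∑ α : Fin n → ZMod 2, fc f α ^ 2
      = (∑ α : Fin n → ZMod 2, ∑ y : Fin n → ZMod 2,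
          f y * (fc f α * eps (ip α y))) / 2 ^ n := by
        have step : ∀ α : Fin n → ZMod 2, fc f α ^ 2
            = (∑ y : Fin n → ZMod 2, f y * (fc f α * eps (ip α y))) / 2 ^ n := by
          intro α
          rw [sq]
          nth_rewrite 2 [fc_eq]
          rw [← mul_div_assoc, Finset.mul_sum]
          congr 1
          exact Finset.sum_congr rfl fun y _ => by ring
        rw [Finset.sum_div]
        exact Finset.sum_congr rfl fun α _ => step α
    _ = (∑ y : Fin n → ZMod 2, f y * f y) / 2 ^ n := by
        rw [Finset.sum_comm]
        congr 1
        refine Finset.sum_congr rfl fun y _ => ?_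
        rw [← Finset.mul_sum, inversion]
    _ = (∑ x : Fin n → ZMod 2, f x ^ 2) / 2 ^ n := by
        congr 1; exact Finset.sum_congr rfl fun x _ => (sq (f x)).symm

lemma eps_zero : eps 0 = 1 := by norm_num [eps, show ZMod.val (0 : ZMod 2) = 0 from rfl]

lemma sum_eq_card_max {ι : Type*} (T : Finset ι) (g : ι → ℝ) (c : ℝ)
    (hle : ∀ i ∈ T, g i ≤ c) (hsum : ∑ i ∈ T, g i = T.card * c) :
    ∀ i ∈ T, g i = c := by
  intro i hi
  by_contra hne
  have hlt : g i < c := lt_of_le_of_ne (hle i hi) hne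
  have : ∑ j ∈ T, g j < ∑ j ∈ T, c := Finset.sum_lt_sum hle ⟨i, hi, hlt⟩
  rw [Finset.sum_const, nsmul_eq_mul] at this
  linarith

noncomputable def L {n : ℕ} (α : Fin n → ZMod 2) :
    (Fin n → ZMod 2) →ₗ[ZMod 2] ZMod 2 where
  toFun x := ip α x
  map_add' x y := ip_add_right α x y
  map_smul' c x := by
    simp [ip, Finset.mul_sum, smul_eq_mul, mul_comm, mul_left_comm]

/-- Rothschild–van Lint. -/
theorem stmt_4 {n k : ℕ} (hn : 1 ≤ n) (hk : k ≤ n) (S : Finset (Fin n → ZMod 2))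
    (hS : S.card = 2 ^ (n - k))
    (h : ∀ α : Fin n → ZMod 2,
      |fc (fun x => if x ∈ S then (1 : ℝ) else 0) α| = 0 ∨
      |fc (fun x => if x ∈ S then (1 : ℝ) else 0) α| = 1 / 2 ^ k) :
    ∃ (a : Fin n → ZMod 2) (V : Submodule (ZMod 2) (Fin n → ZMod 2)),
      Module.finrank (ZMod 2) V = n - k ∧
      (S : Set (Fin n → ZMod 2)) = (a + ·) '' (V : Set (Fin n → ZMod 2)) := by
  classical
  set f : (Fin n → ZMod 2) → ℝ := fun x => if x ∈ S then 1 else 0 with hfdef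
  have h2k : ((2:ℝ) ^ k) ≠ 0 := by positivity
  -- Parseval value
  have hsum_sq : ∑ x : Fin n → ZMod 2, f x ^ 2 = (2:ℝ) ^ (n - k) := by
    have : ∀ x : Fin n → ZMod 2, f x ^ 2 = if x ∈ S then (1:ℝ) else 0 := by
      intro x; by_cases hx : x ∈ S <;> simp [hfdef, hx]
    rw [Finset.sum_congr rfl fun x _ => this x]
    rw [Finset.sum_ite_mem, Finset.univ_inter, Finset.sum_const, hS]
    simp
  have parsv : ∑ α : Fin n → ZMod 2, fc f α ^ 2 = 1 / 2 ^ k := by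
    rw [parseval, hsum_sq, div_eq_div_iff (by positivity) (by positivity),
      one_mul, ← pow_add]
    congr 1
    omega
  set T : Finset (Fin n → ZMod 2) := Finset.univ.filter (fun α => fc f α ≠ 0) with hTdef
  have habs : ∀ α ∈ T, |fc f α| = 1 / 2 ^ k := by
    intro α hα
    rcases h α with h0 | h1
    · exfalso
      rw [hTdef, Finset.mem_filter] at hα
      exact hα.2 (abs_eq_zero.mp h0)
    · exact h1
  have hTsq : ∀ α ∈ T, fc f α ^ 2 = (1 / 2 ^ k) ^ 2 := by
    intro α hα; rw [← sq_abs, habs α hα]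
  have hsumT : ∑ α ∈ T, fc f α ^ 2 = 1 / 2 ^ k := by
    rw [← parsv]
    apply Finset.sum_subset (Finset.subset_univ T)
    intro x _ hx
    rw [hTdef, Finset.mem_filter] at hx
    push_neg at hx
    rw [hx (Finset.mem_univ x)]
    ring
  have hTcardR : (T.card : ℝ) = 2 ^ k := by
    have e : (T.card : ℝ) * (1 / 2 ^ k) ^ 2 = 1 / 2 ^ k := by
      calc (T.card : ℝ) * (1 / 2 ^ k) ^ 2 = ∑ α ∈ T, fc f α ^ 2 := by
            rw [Finset.sum_congr rfl hTsq, Finset.sum_const, nsmul_eq_mul]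
        _ = 1 / 2 ^ k := hsumT
    field_simp at e
    exact e
  -- pick a point of S
  obtain ⟨a, ha⟩ : S.Nonempty := Finset.card_pos.mp (by rw [hS]; positivity)
  have hinvT : ∀ x, ∑ α ∈ T, fc f α * eps (ip α x) = f x := by
    intro x
    rw [← inversion f x]
    apply Finset.sum_subset (Finset.subset_univ T)
    intro b _ hb
    rw [hTdef, Finset.mem_filter] at hb
    push_neg at hb
    rw [hb (Finset.mem_univ b)]
    ring
  have hfa : f a = 1 := by simp [hfdef, ha]
  have hterm : ∀ α ∈ T, fc f α * eps (ip α a) = 1 / 2 ^ k := by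
    apply sum_eq_card_max
    · intro α hα
      calc fc f α * eps (ip α a) ≤ |fc f α * eps (ip α a)| := le_abs_self _
        _ = 1 / 2 ^ k := by rw [abs_mul, habs α hα, abs_eps, mul_one]
    · rw [hinvT a, hfa, hTcardR]
      field_simp
  have hfc_eq : ∀ α ∈ T, fc f α = (1 / 2 ^ k) * eps (ip α a) := by
    intro α hα
    calc fc f α = (fc f α * eps (ip α a)) * eps (ip α a) := by
          rw [mul_assoc, eps_sq, mul_one]
      _ = (1 / 2 ^ k) * eps (ip α a) := by rw [hterm α hα]
  have hfx : ∀ x, f x = (1 / 2 ^ k) * ∑ α ∈ T, eps (ip α (a + x)) := by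
    intro x
    rw [← hinvT x, Finset.mul_sum]
    refine Finset.sum_congr rfl fun α hα => ?_
    rw [hfc_eq α hα, ip_add_right, eps_add]
    ring
  have hmem : ∀ x, x ∈ S ↔ ∀ α ∈ T, ip α (a + x) = 0 := by
    intro x
    constructor
    · intro hx
      have hfx1 : f x = 1 := by simp [hfdef, hx]
      have hsum1 : ∑ α ∈ T, eps (ip α (a + x)) = T.card * 1 := by
        have e := hfx x
        rw [hfx1] at e
        rw [hTcardR, mul_one]
        field_simp at e
        linarith
      intro α hα
      exact (eps_eq_one_iff _).mp
        (sum_eq_card_max T _ 1 (fun β _ => eps_le_one _) hsum1 α hα)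
    · intro hall
      have hfx1 : f x = 1 := by
        rw [hfx x, Finset.sum_congr rfl fun α hα => by rw [hall α hα, eps_zero],
          Finset.sum_const, nsmul_eq_mul, mul_one, hTcardR]
        field_simp
      by_contra hxS
      simp [hfdef, hxS] at hfx1
  set V : Submodule (ZMod 2) (Fin n → ZMod 2) := ⨅ α ∈ T, LinearMap.ker (L α) with hVdef
  have hVmem : ∀ v, v ∈ V ↔ ∀ α ∈ T, ip α v = 0 := by
    intro v
    simp [hVdef, Submodule.mem_iInf, LinearMap.mem_ker, L]
  have hSeq : (S : Set (Fin n → ZMod 2)) = (a + ·) '' (V : Set (Fin n → ZMod 2)) := by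
    ext x
    simp only [Set.mem_image, SetLike.mem_coe, Finset.mem_coe]
    constructor
    · intro hx
      exact ⟨a + x, (hVmem _).mpr ((hmem x).mp hx),
        by rw [← add_assoc, pi_add_self, zero_add]⟩
    · rintro ⟨v, hv, rfl⟩
      apply (hmem _).mpr
      intro α hα
      have e : a + (a + v) = v := by rw [← add_assoc, pi_add_self, zero_add]
      rw [e]
      exact (hVmem v).mp hv α hα
  refine ⟨a, V, ?_, hSeq⟩
  -- cardinality implies finrank
  haveI : Fintype ↥V := Fintype.ofFinite _
  have hcard : Fintype.card ↥V = 2 ^ (n - k) := by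
    have h1 : (V : Set (Fin n → ZMod 2)).ncard = S.card := by
      rw [← Set.ncard_coe_finset, hSeq,
        Set.ncard_image_of_injective _ (add_right_injective a)]
    have h2 : Nat.card ↥V = (V : Set (Fin n → ZMod 2)).ncard :=
      Nat.card_coe_set_eq _
    rw [← Nat.card_eq_fintype_card, h2, h1, hS]
  have := Module.card_eq_pow_finrank (K := ZMod 2) (V := ↥V)
  rw [ZMod.card, hcard] at this
  exact (Nat.pow_right_injective le_rfl this.symm)
end

section
/- Let f : F_2^n → {0,1} with f(0)=1, f̂(0) = 1/2^{k−1}, and all other Fourier coefficients in {0, ±1/2^k}. With A = {α : f̂(α) = 1/2^k} and B = {β : f̂(β) = −1/2^k}, the sumset B+B is contained in A ∪ {0}. -/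
open Finset Pointwise

lemma zmod2_cases (a : ZMod 2) : a = 0 ∨ a = 1 := by revert a; decide

lemma zmod2_neg_one_pow_add (a b : ZMod 2) :
    ((-1 : ℝ)) ^ (a + b).val = (-1 : ℝ) ^ a.val * (-1 : ℝ) ^ b.val := by
  rcases zmod2_cases a with rfl | rfl <;> rcases zmod2_cases b with rfl | rfl <;>
    simp [show ((1 : ZMod 2) + 1) = 0 from rfl, show ((0 : ZMod 2)).val = 0 from rfl,
      show ((1 : ZMod 2)).val = 1 from rfl]

lemma zmod2_neg_one_pow_pm (a : ZMod 2) :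
    ((-1 : ℝ)) ^ a.val = 1 ∨ ((-1 : ℝ)) ^ a.val = -1 := by
  rcases zmod2_cases a with rfl | rfl <;>
    simp [show ((0 : ZMod 2)).val = 0 from rfl, show ((1 : ZMod 2)).val = 1 from rfl]

theorem stmt_6 {n k : ℕ} (hk : 1 ≤ k) (hn : k ≤ n) (f : (Fin n → ZMod 2) → ℝ)
    (hf : ∀ x, f x = 0 ∨ f x = 1) (hf0 : f 0 = 1)
    (h0 : fc f 0 = 1 / 2 ^ (k - 1))
    (h : ∀ α : Fin n → ZMod 2, α ≠ 0 →
      fc f α = 0 ∨ fc f α = 1 / 2 ^ k ∨ fc f α = -(1 / 2 ^ k)) :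
    {β : Fin n → ZMod 2 | fc f β = -(1 / 2 ^ k)} +
      {β : Fin n → ZMod 2 | fc f β = -(1 / 2 ^ k)} ⊆
      {α : Fin n → ZMod 2 | fc f α = 1 / 2 ^ k} ∪ {0} := by
  obtain ⟨k, rfl⟩ : ∃ k', k = k' + 1 := ⟨k - 1, (Nat.succ_pred_eq_of_pos hk).symm⟩
  rintro β ⟨β₁, hβ₁, β₂, hβ₂, rfl⟩
  simp only [Set.mem_setOf_eq] at hβ₁ hβ₂
  by_cases hz : β₁ + β₂ = 0
  · right; simp [hz]
  left
  simp only [Set.mem_setOf_eq]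
  -- abbreviation for the character
  set c : (Fin n → ZMod 2) → (Fin n → ZMod 2) → ℝ :=
    fun β x => (-1 : ℝ) ^ (∑ i, β i * x i : ZMod 2).val with hc
  have hc_mul : ∀ x, c (β₁ + β₂) x = c β₁ x * c β₂ x := by
    intro x
    have : (∑ i, (β₁ + β₂) i * x i : ZMod 2) = (∑ i, β₁ i * x i) + ∑ i, β₂ i * x i := by
      rw [← Finset.sum_add_distrib]
      exact Finset.sum_congr rfl fun i _ => by simp [add_mul]
    rw [hc]; simp only []
    rw [this, zmod2_neg_one_pow_add]
  have hc0 : ∀ β, c β 0 = 1 := by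
    intro β
    have : (∑ i, β i * (0 : Fin n → ZMod 2) i : ZMod 2) = 0 := by simp
    simp [hc, this]
  have hc0' : ∀ x, c 0 x = 1 := by
    intro x
    have : (∑ i, (0 : Fin n → ZMod 2) i * x i : ZMod 2) = 0 := by simp
    simp [hc, this]
  -- nonnegativity of f
  have hfnn : ∀ x, 0 ≤ f x := fun x => by rcases hf x with h' | h' <;> simp [h']
  -- key positivity of the sum with all four characters
  have key : (4 : ℝ) ≤ ∑ x : Fin n → ZMod 2,
      f x * (c β₁ x + c β₂ x + c β₁ x * c β₂ x + 1) := by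
    have h0term : f 0 * (c β₁ 0 + c β₂ 0 + c β₁ 0 * c β₂ 0 + 1) = 4 := by
      rw [hc0, hc0, hf0]; ring
    calc (4 : ℝ) = f 0 * (c β₁ 0 + c β₂ 0 + c β₁ 0 * c β₂ 0 + 1) := h0term.symm
      _ ≤ _ := by
          apply Finset.single_le_sum (f := fun x => f x * (c β₁ x + c β₂ x + c β₁ x * c β₂ x + 1))
          · intro x _
            apply mul_nonneg (hfnn x)
            rcases zmod2_neg_one_pow_pm (∑ i, β₁ i * x i : ZMod 2) with h1 | h1 <;>
              rcases zmod2_neg_one_pow_pm (∑ i, β₂ i * x i : ZMod 2) with h2 | h2 <;>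
                simp only [hc] <;> rw [h1, h2] <;> norm_num
          · exact Finset.mem_univ 0
  -- rewrite the key sum
  have expand : ∑ x : Fin n → ZMod 2, f x * (c β₁ x + c β₂ x + c β₁ x * c β₂ x + 1)
      = (fc f β₁ + fc f β₂ + fc f (β₁ + β₂) + fc f 0) * 2 ^ n := by
    have e1 : fc f β₁ = (∑ x : Fin n → ZMod 2, f x * c β₁ x) / 2 ^ n := rfl
    have e2 : fc f β₂ = (∑ x : Fin n → ZMod 2, f x * c β₂ x) / 2 ^ n := rfl
    have e3 : fc f (β₁ + β₂) = (∑ x : Fin n → ZMod 2, f x * (c β₁ x * c β₂ x)) / 2 ^ n := by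
      rw [show fc f (β₁ + β₂) = (∑ x : Fin n → ZMod 2, f x * c (β₁ + β₂) x) / 2 ^ n from rfl]
      congr 1
      exact Finset.sum_congr rfl fun x _ => by rw [hc_mul]
    have e4 : fc f 0 = (∑ x : Fin n → ZMod 2, f x) / 2 ^ n := by
      rw [show fc f 0 = (∑ x : Fin n → ZMod 2, f x * c 0 x) / 2 ^ n from rfl]
      congr 1
      exact Finset.sum_congr rfl fun x _ => by rw [hc0', mul_one]
    rw [e1, e2, e3, e4]
    have hpow : (2 : ℝ) ^ n ≠ 0 := by positivity
    field_simp
    rw [← Finset.sum_add_distrib, ← Finset.sum_add_distrib, ← Finset.sum_add_distrib]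
    exact Finset.sum_congr rfl fun x _ => by ring
  -- deduce positivity of fc f (β₁ + β₂)
  have hpow : (0 : ℝ) < 2 ^ n := by positivity
  have hpos : 0 < fc f (β₁ + β₂) := by
    rw [expand, hβ₁, hβ₂, h0] at key
    simp only [Nat.add_sub_cancel] at key
    have h2k : (2 : ℝ) ^ (k + 1) = 2 ^ k * 2 := by ring
    by_contra hle
    push_neg at hle
    have : (-(1 / 2 ^ (k+1)) + -(1 / 2 ^ (k+1)) + fc f (β₁ + β₂) + 1 / 2 ^ k) * 2 ^ n
        ≤ 0 * 2 ^ n := by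
      apply mul_le_mul_of_nonneg_right _ (le_of_lt hpow)
      rw [h2k]
      have : (0:ℝ) < 2 ^ k := by positivity
      rw [show -(1 / (2 ^ k * 2)) + -(1 / (2 ^ k * 2)) + fc f (β₁ + β₂) + 1 / 2 ^ k
          = fc f (β₁ + β₂) by field_simp; ring]
      exact hle
    linarith
  rcases h _ hz with h' | h' | h'
  · rw [h'] at hpos; exact absurd hpos (lt_irrefl 0)
  · exact h'
  · exfalso
    rw [h'] at hpos
    have : (0:ℝ) < 1 / 2 ^ (k+1) := by positivity
    linarith
end

section
/- Under the hypotheses that f : F_2^n → {0,1} has f(0)=1, f̂(0)=1/2^{k−1}, and all other Fourier coefficients in {0, ±1/2^k}, the set B = {β : f̂(β) = −1/2^k} is sum-free: for all β_1, β_2, β_3 ∈ B, β_1 + β_2 ≠ β_3. -/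
open Finset

lemma char_mul (a b : ZMod 2) : (-1 : ℝ) ^ a.val * (-1 : ℝ) ^ b.val = (-1 : ℝ) ^ (a + b).val := by
  have h2 : (ZMod.val (2 : ZMod 2)) = 0 := rfl
  rw [← pow_add, ZMod.val_add, ← neg_one_pow_eq_pow_mod_two]

theorem stmt_7 {n k : ℕ} (hk : 1 ≤ k) (hn : k ≤ n) (f : (Fin n → ZMod 2) → ℝ)
    (hf : ∀ x, f x = 0 ∨ f x = 1) (hf0 : f 0 = 1)
    (h0 : fc f 0 = 1 / 2 ^ (k - 1))
    (h : ∀ α : Fin n → ZMod 2, α ≠ 0 →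
      fc f α = 0 ∨ fc f α = 1 / 2 ^ k ∨ fc f α = -(1 / 2 ^ k)) :
    ∀ β₁ ∈ {β : Fin n → ZMod 2 | fc f β = -(1 / 2 ^ k)},
      ∀ β₂ ∈ {β : Fin n → ZMod 2 | fc f β = -(1 / 2 ^ k)},
        ∀ β₃ ∈ {β : Fin n → ZMod 2 | fc f β = -(1 / 2 ^ k)},
          β₁ + β₂ ≠ β₃ := by
  intro β₁ hb1 β₂ hb2 β₃ hb3 heq
  simp only [Set.mem_setOf_eq] at hb1 hb2 hb3
  subst heq
  -- characters
  set χ : (Fin n → ZMod 2) → (Fin n → ZMod 2) → ℝ :=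
    fun α x => (-1 : ℝ) ^ (∑ i, α i * x i : ZMod 2).val with hχ
  have hchar : ∀ x, χ β₁ x * χ β₂ x = χ (β₁ + β₂) x := by
    intro x
    simp only [hχ]
    rw [char_mul]
    congr 2
    rw [← Finset.sum_add_distrib]
    exact Finset.sum_congr rfl (fun i _ => by simp [add_mul]
    )
  -- S ≥ 0
  have hS : (0 : ℝ) ≤ ∑ x : Fin n → ZMod 2, f x * (1 + χ β₁ x) * (1 + χ β₂ x) := by
    apply Finset.sum_nonneg
    intro x _
    have hf' : 0 ≤ f x := by rcases hf x with h' | h' <;> rw [h'] <;> norm_num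
    have h1 : 0 ≤ 1 + χ β₁ x := by
      rcases neg_one_pow_eq_or ℝ (∑ i, β₁ i * x i : ZMod 2).val with h' | h' <;>
        simp [hχ, h']
    have h2 : 0 ≤ 1 + χ β₂ x := by
      rcases neg_one_pow_eq_or ℝ (∑ i, β₂ i * x i : ZMod 2).val with h' | h' <;>
        simp [hχ, h']
    positivity
  -- expand S
  have hexpand : ∑ x : Fin n → ZMod 2, f x * (1 + χ β₁ x) * (1 + χ β₂ x)
      = (fc f 0 + fc f β₁ + fc f β₂ + fc f (β₁ + β₂)) * 2 ^ n := by
    have h2n : (2 : ℝ) ^ n ≠ 0 := by positivity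
    have hfc0 : fc f 0 * 2 ^ n = ∑ x : Fin n → ZMod 2, f x := by
      rw [fc, div_mul_cancel₀ _ h2n]
      exact Finset.sum_congr rfl (fun x _ => by simp)
    have hfc : ∀ α, fc f α * 2 ^ n = ∑ x : Fin n → ZMod 2, f x * χ α x := by
      intro α
      rw [fc, div_mul_cancel₀ _ h2n]
    rw [add_mul, add_mul, add_mul, hfc0, hfc, hfc, hfc]
    rw [← Finset.sum_add_distrib, ← Finset.sum_add_distrib, ← Finset.sum_add_distrib]
    refine Finset.sum_congr rfl (fun x _ => ?_)
    rw [← hchar x]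
    ring
  rw [hexpand, hb1, hb2, hb3, h0] at hS
  have hkpow : (2 : ℝ) ^ k = 2 * 2 ^ (k - 1) := by
    rw [← pow_succ']
    congr 1
    omega
  have hpos : (0 : ℝ) < 2 ^ (k - 1) := by positivity
  have hval : 1 / (2 : ℝ) ^ (k - 1) + -(1 / 2 ^ k) + -(1 / 2 ^ k) + -(1 / 2 ^ k)
      = -(1 / 2 ^ k) := by
    rw [hkpow]
    field_simp
    ring
  rw [hval, neg_mul] at hS
  have hpk : (0 : ℝ) < 2 ^ k := by positivity
  have hpn : (0 : ℝ) < 2 ^ n := by positivity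
  nlinarith [mul_pos (one_div_pos.mpr hpk) hpn]
end

section
/- (Laba) Let G be an abelian group and A ⊆ G a finite nonempty subset such that |A−A| < (3/2)|A|. Then A−A is a subgroup of G. -/
open Finset Pointwise

private lemma key_9 {G : Type*} [AddCommGroup G] [DecidableEq G] (A : Finset G)
    (h : 2 * (A - A).card < 3 * A.card)
    {d : G} (hd : d ∈ A - A) : A.card < 2 * (A ∩ (A + {d})).card := by
  obtain ⟨a, ha, b, hb, rfl⟩ := Finset.mem_sub.mp hd
  set d := a - b with hd'
  have himg : (A ∪ (A + {d})).image (· - a) ⊆ A - A := by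
    intro x hx
    simp only [Finset.mem_image, Finset.mem_union, Finset.mem_add,
      Finset.mem_singleton] at hx
    obtain ⟨y, hy | ⟨u, hu, v, hv, rfl⟩, rfl⟩ := hx
    · exact Finset.sub_mem_sub hy ha
    · subst hv
      have heq : u + (a - b) - a = u - b := by abel
      rw [heq]
      exact Finset.sub_mem_sub hu hb
  have hcard1 : (A ∪ (A + {d})).card ≤ (A - A).card := by
    have := Finset.card_le_card himg
    rwa [Finset.card_image_of_injective _ (sub_left_injective)] at this
  have hc2 : (A + {d}).card = A.card := by
    rw [Finset.add_singleton]
    exact Finset.card_image_of_injective _ (add_left_injective d)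
  have hIU := Finset.card_union_add_card_inter A (A + {d})
  omega

/-- Laba's lemma: if `|A − A| < (3/2)|A|` then `A − A` is a subgroup. -/
theorem stmt_9 {G : Type*} [AddCommGroup G] [DecidableEq G] (A : Finset G)
    (hA : A.Nonempty) (h : 2 * (A - A).card < 3 * A.card) :
    ∃ H : AddSubgroup G, ((A - A : Finset G) : Set G) = (H : Set G) := by
  have hneg : ∀ x ∈ A - A, -x ∈ A - A := by
    intro x hx
    obtain ⟨a, ha, b, hb, rfl⟩ := Finset.mem_sub.mp hx
    rw [neg_sub]
    exact Finset.sub_mem_sub hb ha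
  have hadd : ∀ x ∈ A - A, ∀ y ∈ A - A, x + y ∈ A - A := by
    intro x hx y hy
    have h1 := key_9 A h hx
    have h2 := key_9 A h (hneg y hy)
    set S := A ∩ (A + {x})
    set T := A ∩ (A + {-y})
    have hST : (S ∩ T).Nonempty := by
      rw [← Finset.card_pos]
      have hUA : (S ∪ T).card ≤ A.card :=
        Finset.card_le_card (Finset.union_subset Finset.inter_subset_left
          Finset.inter_subset_left)
      have := Finset.card_union_add_card_inter S T
      omega
    obtain ⟨c, hc⟩ := hST
    simp only [S, T, Finset.mem_inter, Finset.mem_add, Finset.mem_singleton] at hc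
    obtain ⟨⟨-, u, hu, v, hv, hcv⟩, -, p, hp, q, hq, hcq⟩ := hc
    rw [hv] at hcv
    rw [hq] at hcq
    have h3 : u + x = p + -y := hcv.trans hcq.symm
    have hx2 : x = p + -y - u := by rw [← h3]; abel
    have hgoal : x + y = p - u := by rw [hx2]; abel
    rw [hgoal]
    exact Finset.sub_mem_sub hp hu
  obtain ⟨a, ha⟩ := hA
  refine ⟨{ carrier := ↑(A - A)
            zero_mem' := by simpa using Finset.sub_mem_sub ha ha
            add_mem' := fun hx hy => hadd _ hx _ hy
            neg_mem' := fun hx => hneg _ hx }, rfl⟩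
end

section
/- (Main Lemma) Let k ≥ 5 and n ≥ k be integers, and let f : F_2^n → {0,1} be a Boolean function with f̂(0) = 1/2^{k−1} and every other Fourier coefficient equal to 0 or ±1/2^k. Then f is the indicator function of a disjoint union of two affine subspaces of F_2^n, each of dimension n−k. -/
open Finset

namespace St11

variable {n : ℕ}

abbrev G (n : ℕ) := Fin n → ZMod 2

def bf (a x : G n) : ZMod 2 := ∑ i, a i * x i

noncomputable def ch (a x : G n) : ℤ := if bf a x = 0 then 1 else -1

lemma zmod2_cases : ∀ c : ZMod 2, c = 0 ∨ c = 1 := by decide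

lemma ch_cases (a x : G n) : ch a x = 1 ∨ ch a x = -1 := by
  unfold ch; split <;> simp

lemma ch_abs_le (a x : G n) : ch a x ≤ 1 ∧ -1 ≤ ch a x := by
  rcases ch_cases a x with h | h <;> simp [h]

lemma bf_add_right (a x y : G n) : bf a (x + y) = bf a x + bf a y := by
  unfold bf
  rw [← Finset.sum_add_distrib]
  exact Finset.sum_congr rfl fun i _ => by simp [mul_add]

lemma bf_add_left (a b x : G n) : bf (a + b) x = bf a x + bf b x := by
  unfold bf
  rw [← Finset.sum_add_distrib]
  exact Finset.sum_congr rfl fun i _ => by simp [add_mul]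

lemma if_zmod2_add (u v : ZMod 2) :
    (if u + v = 0 then (1:ℤ) else -1) = (if u = 0 then (1:ℤ) else -1) * (if v = 0 then (1:ℤ) else -1) := by
  rcases zmod2_cases u with hu | hu <;> rcases zmod2_cases v with hv | hv <;> simp [hu, hv] <;> decide

lemma ch_add_right (a x y : G n) : ch a (x + y) = ch a x * ch a y := by
  unfold ch; rw [bf_add_right, if_zmod2_add]

lemma ch_add_left (a b x : G n) : ch (a + b) x = ch a x * ch b x := by
  unfold ch; rw [bf_add_left, if_zmod2_add]

lemma bf_zero_left (x : G n) : bf 0 x = 0 := by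
  unfold bf; simp

lemma ch_zero_left (x : G n) : ch 0 x = 1 := by unfold ch; simp [bf_zero_left]

lemma ch_mul_self (a x : G n) : ch a x * ch a x = 1 := by
  rcases ch_cases a x with h | h <;> rw [h] <;> norm_num

lemma add_self_zero (x : G n) : x + x = 0 := by
  funext i
  have : ∀ c : ZMod 2, c + c = 0 := by decide
  exact this (x i)

lemma add_eq_zero_iff_eq (x y : G n) : x + y = 0 ↔ x = y := by
  constructor
  · intro h
    have h2 : x + (x + y) = x + 0 := by rw [h]
    rw [← add_assoc, add_self_zero, zero_add, add_zero] at h2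
    exact h2.symm
  · rintro rfl; exact add_self_zero x

/-- key orthogonality -/
lemma orth (z : G n) : ∑ γ : G n, ch γ z = if z = 0 then (2:ℤ)^n else 0 := by
  have hfac : ∀ γ : G n, ch γ z = ∏ i, (if γ i * z i = 0 then (1:ℤ) else -1) := by
    intro γ
    unfold ch bf
    induction (Finset.univ : Finset (Fin n)) using Finset.cons_induction with
    | empty => simp
    | cons a s ha ih =>
        rw [Finset.sum_cons, Finset.prod_cons, if_zmod2_add, ih]
  calc ∑ γ : G n, ch γ z = ∑ γ : G n, ∏ i, (if γ i * z i = 0 then (1:ℤ) else -1) := by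
        exact Finset.sum_congr rfl fun γ _ => hfac γ
    _ = ∑ γ ∈ Fintype.piFinset (fun _ : Fin n => (Finset.univ : Finset (ZMod 2))),
          ∏ i, (if γ i * z i = 0 then (1:ℤ) else -1) := by rw [Fintype.piFinset_univ]
    _ = ∏ i, ∑ c : ZMod 2, (if c * z i = 0 then (1:ℤ) else -1) := by
        rw [Finset.prod_univ_sum]
    _ = ∏ i, (if z i = 0 then (2:ℤ) else 0) := by
        refine Finset.prod_congr rfl fun i _ => ?_
        have : ∀ v : ZMod 2, (∑ c : ZMod 2, (if c * v = 0 then (1:ℤ) else -1)) = if v = 0 then 2 else 0 := by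
          decide
        exact this (z i)
    _ = if z = 0 then (2:ℤ)^n else 0 := by
        by_cases hz : z = 0
        · simp [hz]
        · have : ∃ i, z i ≠ 0 := by
            by_contra hc
            push_neg at hc
            exact hz (funext fun i => hc i)
          obtain ⟨i, hi⟩ := this
          rw [if_neg hz]
          exact Finset.prod_eq_zero (Finset.mem_univ i) (by simp [hi])

noncomputable section

variable (S : Finset (G n))

def W (γ : G n) : ℤ := ∑ x ∈ S, ch γ x

variable {S}

lemma W_zero : W S 0 = S.card := by
  unfold W
  rw [Finset.sum_congr rfl fun x _ => ch_zero_left x]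
  simp

lemma W_parity (γ : G n) : (2:ℤ) ∣ (W S γ + S.card) := by
  unfold W
  have h : (∑ x ∈ S, ch γ x) + (S.card : ℤ) = ∑ x ∈ S, (ch γ x + 1) := by
    rw [Finset.sum_add_distrib, Finset.sum_const]
    simp [mul_comm]
  rw [h]
  refine Finset.dvd_sum fun x _ => ?_
  rcases ch_cases γ x with h' | h' <;> rw [h'] <;> norm_num

lemma inv1 (x : G n) : ∑ γ : G n, W S γ * ch γ x = if x ∈ S then (2:ℤ)^n else 0 := by
  unfold W
  calc ∑ γ : G n, (∑ y ∈ S, ch γ y) * ch γ x = ∑ γ : G n, ∑ y ∈ S, ch γ (y + x) := by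
        refine Finset.sum_congr rfl fun γ _ => ?_
        rw [Finset.sum_mul]
        exact Finset.sum_congr rfl fun y _ => (ch_add_right γ y x).symm
    _ = ∑ y ∈ S, ∑ γ : G n, ch γ (y + x) := Finset.sum_comm
    _ = ∑ y ∈ S, (if y + x = 0 then (2:ℤ)^n else 0) := by
        exact Finset.sum_congr rfl fun y _ => orth _
    _ = ∑ y ∈ S, (if y = x then (2:ℤ)^n else 0) := by
        refine Finset.sum_congr rfl fun y _ => if_congr (add_eq_zero_iff_eq y x) rfl rfl
    _ = if x ∈ S then (2:ℤ)^n else 0 := Finset.sum_ite_eq' S x (fun _ => (2:ℤ)^n)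

lemma parseval : ∑ γ : G n, (W S γ)^2 = (2:ℤ)^n * S.card := by
  unfold W
  calc ∑ γ : G n, (∑ y ∈ S, ch γ y)^2
      = ∑ γ : G n, ∑ y ∈ S, ∑ z ∈ S, ch γ (y + z) := by
        refine Finset.sum_congr rfl fun γ _ => ?_
        rw [sq, Finset.sum_mul_sum]
        exact Finset.sum_congr rfl fun y _ => Finset.sum_congr rfl fun z _ => (ch_add_right γ y z).symm
    _ = ∑ y ∈ S, ∑ z ∈ S, ∑ γ : G n, ch γ (y + z) := by
        rw [Finset.sum_comm]
        exact Finset.sum_congr rfl fun y _ => Finset.sum_comm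
    _ = ∑ y ∈ S, ∑ z ∈ S, (if z = y then (2:ℤ)^n else 0) := by
        refine Finset.sum_congr rfl fun y _ => Finset.sum_congr rfl fun z _ => ?_
        rw [orth]
        congr 1
        exact propext (by rw [add_comm]; exact (add_eq_zero_iff_eq z y))
    _ = ∑ y ∈ S, (2:ℤ)^n := by
        refine Finset.sum_congr rfl fun y hy => ?_
        rw [Finset.sum_ite_eq' S y (fun _ => (2:ℤ)^n), if_pos hy]
    _ = (2:ℤ)^n * S.card := by rw [Finset.sum_const]; ring

lemma paircount (w : G n) :
    ∑ γ : G n, (W S γ)^2 * ch γ w = (2:ℤ)^n * ((S.filter (fun x => x + w ∈ S)).card) := by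
  unfold W
  calc ∑ γ : G n, (∑ y ∈ S, ch γ y)^2 * ch γ w
      = ∑ γ : G n, ∑ y ∈ S, ∑ z ∈ S, ch γ (y + z + w) := by
        refine Finset.sum_congr rfl fun γ _ => ?_
        rw [sq, Finset.sum_mul_sum, Finset.sum_mul]
        refine Finset.sum_congr rfl fun y _ => ?_
        rw [Finset.sum_mul]
        refine Finset.sum_congr rfl fun z _ => ?_
        rw [← ch_add_right, ← ch_add_right]
    _ = ∑ y ∈ S, ∑ z ∈ S, ∑ γ : G n, ch γ (y + z + w) := by
        rw [Finset.sum_comm]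
        exact Finset.sum_congr rfl fun y _ => Finset.sum_comm
    _ = ∑ y ∈ S, ∑ z ∈ S, (if z = y + w then (2:ℤ)^n else 0) := by
        refine Finset.sum_congr rfl fun y _ => Finset.sum_congr rfl fun z _ => ?_
        rw [orth]
        congr 1
        refine propext ⟨fun h => ?_, fun h => ?_⟩
        · have h2 := (add_eq_zero_iff_eq (y + z) w).1 h
          rw [← h2, ← add_assoc, add_self_zero, zero_add]
        · subst h; rw [show y + (y+w) + w = (y+y) + (w+w) by ring, add_self_zero, add_self_zero, add_zero]
    _ = ∑ y ∈ S, (if y + w ∈ S then (2:ℤ)^n else 0) := by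
        refine Finset.sum_congr rfl fun y _ => Finset.sum_ite_eq' S (y+w) (fun _ => (2:ℤ)^n)
    _ = (2:ℤ)^n * ((S.filter (fun x => x + w ∈ S)).card) := by
        rw [← Finset.sum_filter, Finset.sum_const, nsmul_eq_mul]
        ring


lemma sum_eq_const_of_le {α : Type*} (s : Finset α) (g : α → ℤ) (c : ℤ)
    (hle : ∀ i ∈ s, g i ≤ c) (hsum : ∑ i ∈ s, g i = s.card * c) :
    ∀ i ∈ s, g i = c := by
  by_contra hc
  push_neg at hc
  obtain ⟨i, hi, hne⟩ := hc
  have hlt : g i < c := lt_of_le_of_ne (hle i hi) hne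
  have : ∑ j ∈ s, g j < ∑ j ∈ s, c := Finset.sum_lt_sum hle ⟨i, hi, hlt⟩
  rw [Finset.sum_const, hsum, nsmul_eq_mul] at this
  exact lt_irrefl _ this

lemma sum_univ_eq_sum_filter_ne (g : G n → ℤ) :
    ∑ γ : G n, g γ = ∑ γ ∈ Finset.univ.filter (fun γ => g γ ≠ 0), g γ := by
  symm
  refine Finset.sum_subset (Finset.filter_subset _ _) fun γ _ hγ => ?_
  by_contra h
  exact hγ (Finset.mem_filter.2 ⟨Finset.mem_univ _, h⟩)

/-- Lemma A : 3-closure of the support. -/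
lemma closure3 (hne : S.Nonempty)
    (hval : ∀ γ, W S γ = 0 ∨ W S γ = S.card ∨ W S γ = -S.card) :
    ∀ x ∈ S, ∀ y ∈ S, ∀ z ∈ S, x + y + z ∈ S := by
  set M : ℤ := (S.card : ℤ) with hMdef
  have hM : 0 < M := by
    have := Finset.card_pos.2 hne
    rw [hMdef]
    exact_mod_cast this
  set BT := Finset.univ.filter (fun γ : G n => W S γ ≠ 0) with hBTdef
  have hWsq : ∀ γ ∈ BT, (W S γ)^2 = M^2 := by
    intro γ hγ
    have hγ' := (Finset.mem_filter.1 hγ).2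
    rcases hval γ with h | h | h
    · exact absurd h hγ'
    · rw [h]
    · rw [h]; ring
  have hBTcard : (BT.card : ℤ) * M = 2^n := by
    have hp := parseval (S := S)
    rw [sum_univ_eq_sum_filter_ne (fun γ => (W S γ)^2)] at hp
    have he : Finset.univ.filter (fun γ : G n => (W S γ)^2 ≠ 0) = BT := by
      apply Finset.filter_congr
      intro γ _
      simp [pow_eq_zero_iff]
    rw [he] at hp
    rw [Finset.sum_congr rfl hWsq] at hp
    rw [Finset.sum_const, nsmul_eq_mul] at hp
    have h2 : (BT.card : ℤ) * M * M = 2^n * M := by rw [← hp]; ring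
    exact mul_right_cancel₀ (ne_of_gt hM) h2
  have align : ∀ x ∈ S, ∀ γ ∈ BT, W S γ * ch γ x = M := by
    intro x hx
    have hinv := inv1 (S := S) x
    rw [if_pos hx] at hinv
    rw [sum_univ_eq_sum_filter_ne (fun γ => W S γ * ch γ x)] at hinv
    have hsub : Finset.univ.filter (fun γ : G n => W S γ * ch γ x ≠ 0) = BT := by
      apply Finset.filter_congr
      intro γ _
      constructor
      · intro h hW; rw [hW] at h; simp at h
      · intro h
        rcases ch_cases γ x with hc | hc <;> rw [hc] <;> simpa using h
    rw [hsub, ← hBTcard] at hinv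
    refine sum_eq_const_of_le BT _ M ?_ hinv
    intro γ hγ
    have h2 : (W S γ * ch γ x)^2 = M^2 := by
      rw [mul_pow]
      rcases ch_cases γ x with hc | hc <;> rw [hc] <;> rw [hWsq γ hγ] <;> ring
    nlinarith [sq_nonneg (W S γ * ch γ x - M), sq_nonneg (W S γ * ch γ x + M)]
  intro x hx y hy z hz
  have key : ∑ γ : G n, W S γ * ch γ (x + y + z) = 2^n := by
    rw [sum_univ_eq_sum_filter_ne (fun γ => W S γ * ch γ (x+y+z))]
    have hsub2 : Finset.univ.filter (fun γ : G n => W S γ * ch γ (x+y+z) ≠ 0) = BT := by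
      apply Finset.filter_congr
      intro γ _
      constructor
      · intro h hW; rw [hW] at h; simp at h
      · intro h
        rcases ch_cases γ (x+y+z) with hc | hc <;> rw [hc] <;> simpa using h
    rw [hsub2]
    have hterm : ∀ γ ∈ BT, W S γ * ch γ (x+y+z) = M := by
      intro γ hγ
      have e1 := align x hx γ hγ
      have e2 := align y hy γ hγ
      have e3 := align z hz γ hγ
      have hch : ch γ (x + y + z) = ch γ x * ch γ y * ch γ z := by
        rw [ch_add_right, ch_add_right]
      have hmul : (W S γ * ch γ x) * (W S γ * ch γ y) * (W S γ * ch γ z) = M^3 := by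
        rw [e1, e2, e3]; ring
      have h2 : (W S γ)^2 * (W S γ * ch γ (x+y+z)) = M^2 * M := by
        rw [hch, hWsq γ hγ]
        calc (M:ℤ)^2 * (W S γ * (ch γ x * ch γ y * ch γ z))
            = (W S γ)^2 * (W S γ * (ch γ x * ch γ y * ch γ z)) := by rw [hWsq γ hγ]
          _ = (W S γ * ch γ x) * (W S γ * ch γ y) * (W S γ * ch γ z) := by ring
          _ = M^3 := hmul
          _ = M^2 * M := by ring
      have hM2 : (W S γ)^2 = M^2 := hWsq γ hγ
      rw [hM2] at h2
      exact mul_left_cancel₀ (by positivity) h2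
    rw [Finset.sum_congr rfl hterm, Finset.sum_const, nsmul_eq_mul, hBTcard]
  have hinv := inv1 (S := S) (x + y + z)
  rw [key] at hinv
  by_contra hc
  rw [if_neg hc] at hinv
  have : (0:ℤ) < 2^n := by positivity
  omega

/-- canonical direction subgroup of a finset -/
def dirF (T : Finset (G n)) : Finset (G n) := (T ×ˢ T).image (fun p => p.1 + p.2)

lemma mem_dirF {T : Finset (G n)} {u : G n} :
    u ∈ dirF T ↔ ∃ a ∈ T, ∃ b ∈ T, a + b = u := by
  simp [dirF, Finset.mem_image, Finset.mem_product]
  constructor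
  · rintro ⟨a, b, ⟨ha, hb⟩, h⟩; exact ⟨a, ha, b, hb, h⟩
  · rintro ⟨a, ha, b, hb, h⟩; exact ⟨a, b, ⟨ha, hb⟩, h⟩

section dirprops

variable {T : Finset (G n)} (h3 : ∀ x ∈ T, ∀ y ∈ T, ∀ z ∈ T, x + y + z ∈ T)

include h3

lemma mem_dirF_iff {x : G n} (hx : x ∈ T) (u : G n) : u ∈ dirF T ↔ x + u ∈ T := by
  constructor
  · intro h
    obtain ⟨a, ha, b, hb, hab⟩ := mem_dirF.1 h
    rw [← hab, ← add_assoc]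
    exact h3 x hx a ha b hb
  · intro h
    refine mem_dirF.2 ⟨x, hx, x + u, h, ?_⟩
    rw [← add_assoc, add_self_zero, zero_add]

lemma dirF_stab {u t : G n} (hu : u ∈ dirF T) (ht : t ∈ T) : t + u ∈ T :=
  (mem_dirF_iff h3 ht u).1 hu

lemma dirF_add_mem {u v : G n} (hu : u ∈ dirF T) (hv : v ∈ dirF T) : u + v ∈ dirF T := by
  obtain ⟨a, ha, b, hb, hab⟩ := mem_dirF.1 hu
  have hx : a ∈ T := ha
  rw [mem_dirF_iff h3 hx]
  have h1 : a + u ∈ T := dirF_stab h3 hu hx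
  have := dirF_stab h3 hv h1
  rwa [add_assoc] at this

lemma dirF_image {x : G n} (hx : x ∈ T) : (dirF T).image (fun u => x + u) = T := by
  ext v
  simp only [Finset.mem_image]
  constructor
  · rintro ⟨u, hu, rfl⟩
    exact dirF_stab h3 hu hx
  · intro hv
    refine ⟨x + v, ?_, by rw [← add_assoc, add_self_zero, zero_add]⟩
    rw [mem_dirF_iff h3 hx, ← add_assoc, add_self_zero, zero_add]
    exact hv

lemma dirF_card {x : G n} (hx : x ∈ T) : (dirF T).card = T.card := by
  conv_rhs => rw [← dirF_image h3 hx]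
  exact (Finset.card_image_of_injective _ (add_right_injective x)).symm

end dirprops

lemma dirF_zero_mem {T : Finset (G n)} (hne : T.Nonempty) : (0 : G n) ∈ dirF T := by
  obtain ⟨x, hx⟩ := hne
  exact mem_dirF.2 ⟨x, hx, x, hx, add_self_zero x⟩

lemma Wabs (T : Finset (G n)) (γ : G n) : |W T γ| ≤ T.card := by
  unfold W
  calc |∑ x ∈ T, ch γ x| ≤ ∑ x ∈ T, |ch γ x| := Finset.abs_sum_le_sum_abs _ _
    _ ≤ ∑ x ∈ T, 1 := Finset.sum_le_sum (fun x _ => by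
        rcases ch_cases γ x with h | h <;> rw [h] <;> norm_num)
    _ = T.card := by simp

section core

variable {k d : ℕ} (S : Finset (G (k + d)))

def AA : Finset (G (k + d)) := Finset.univ.filter (fun γ => γ ≠ 0 ∧ W S γ ≠ 0)

def sW (θ : G (k + d)) : ℤ := if 0 < W S θ then 1 else -1

def CC (θ : G (k + d)) : Finset (G (k + d)) := S.filter (fun x => sW S θ * ch θ x = -1)

def Dx (x : G (k + d)) : Finset (G (k + d)) := (AA S).filter (fun θ => sW S θ * ch θ x = -1)

variable {S}
variable (hk : 5 ≤ k)
variable (hcard : S.card = 2 ^ (d + 1))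
variable (hW : ∀ γ : G (k + d), γ ≠ 0 → W S γ = 0 ∨ W S γ = 2 ^ d ∨ W S γ = -2 ^ d)

lemma sW_cases (θ : G (k + d)) : sW S θ = 1 ∨ sW S θ = -1 := by
  unfold sW; split <;> simp

lemma sW_sq (θ : G (k + d)) : sW S θ * sW S θ = 1 := by
  rcases sW_cases (S := S) θ with h | h <;> rw [h] <;> norm_num

lemma mem_AA {γ : G (k + d)} : γ ∈ AA S ↔ γ ≠ 0 ∧ W S γ ≠ 0 := by
  unfold AA; simp

include hW in
lemma W_on_A {θ : G (k + d)} (hθ : θ ∈ AA S) : W S θ = sW S θ * 2 ^ d := by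
  obtain ⟨hne, hW0⟩ := mem_AA.1 hθ
  rcases hW θ hne with h | h | h
  · exact absurd h hW0
  · rw [h]; unfold sW; rw [if_pos (by rw [h]; positivity)]; ring
  · unfold sW
    have hneg : ¬ (0 < W S θ) := by
      rw [h]
      have h2 : (0:ℤ) < 2^d := by positivity
      omega
    rw [if_neg hneg, h]; ring

include hW in
lemma sW_mul_W {θ : G (k + d)} (hθ : θ ∈ AA S) : sW S θ * W S θ = 2 ^ d := by
  rw [W_on_A hW hθ, ← mul_assoc, sW_sq, one_mul]

lemma W_off_A {γ : G (k + d)} (h0 : γ ≠ 0) (hA : γ ∉ AA S) : W S γ = 0 := by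
  by_contra h
  exact hA (mem_AA.2 ⟨h0, h⟩)

include hcard in
lemma W0_val : W S 0 = 2 ^ (d + 1) := by rw [W_zero, hcard]; push_cast; ring

/-- split a sum over all γ into 0-term and A-term, when the function vanishes off A -/
lemma sum_split (g : G (k + d) → ℤ)
    (hg : ∀ γ, γ ≠ 0 → γ ∉ AA S → g γ = 0) :
    ∑ γ : G (k + d), g γ = g 0 + ∑ γ ∈ AA S, g γ := by
  have h0A : (0 : G (k+d)) ∉ AA S := by simp [mem_AA]
  have hsub : AA S ⊆ Finset.univ.erase 0 := by
    intro γ hγ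
    exact Finset.mem_erase.2 ⟨(mem_AA.1 hγ).1, Finset.mem_univ _⟩
  rw [← Finset.sum_erase_add Finset.univ g (Finset.mem_univ (0 : G (k+d))), add_comm]
  congr 1
  symm
  refine Finset.sum_subset hsub fun γ hγ hγA => ?_
  exact hg γ (Finset.mem_erase.1 hγ).1 hγA

include hcard hW in
lemma Acard : ((AA S).card : ℤ) * 2 ^ (2 * d) = (2 ^ (k + 1) - 4) * 2 ^ (2 * d) := by
  have hp := parseval (S := S)
  rw [sum_split (S := S) (fun γ => (W S γ)^2) (fun γ h0 hA => by show W S γ ^ 2 = 0; rw [W_off_A h0 hA]; ring)] at hp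
  rw [W0_val hcard] at hp
  rw [Finset.sum_congr rfl (fun θ hθ => show (W S θ)^2 = 2^(2*d) by
    rw [W_on_A hW hθ, mul_pow]
    rcases sW_cases (S := S) θ with h | h <;> rw [h] <;> rw [← pow_mul] <;> ring)] at hp
  rw [Finset.sum_const, nsmul_eq_mul, hcard] at hp
  have h2 : ((2:ℤ)^(d+1))^2 = 4 * 2^(2*d) := by rw [← pow_mul]; ring_nf
  rw [h2] at hp
  have h3 : (2:ℤ)^(k+d) * (2^(d+1) : ℕ) = 2^(k+1) * 2^(2*d) := by
    push_cast
    rw [← pow_add, ← pow_add]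
    ring_nf
  rw [h3] at hp
  linarith

include hcard hW in
lemma Acard' : ((AA S).card : ℤ) = 2 ^ (k + 1) - 4 := by
  have := Acard hcard hW
  have h2 : ((2:ℤ) ^ (2*d)) ≠ 0 := by positivity
  exact mul_right_cancel₀ h2 this

include hk hcard hW in
lemma hd1 : 1 ≤ d := by
  have hA := Acard' hcard hW
  have hne : (AA S).Nonempty := by
    rw [← Finset.card_pos]
    have h64 : (64:ℤ) ≤ 2^(k+1) := by
      calc (64:ℤ) = 2^6 := by norm_num
        _ ≤ 2^(k+1) := pow_le_pow_right₀ (by norm_num) (by omega)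
    omega
  obtain ⟨θ, hθ⟩ := hne
  have hWθ := W_on_A hW hθ
  have hpar := W_parity (S := S) θ
  rw [hcard] at hpar
  by_contra hd
  have hd0 : d = 0 := by omega
  subst hd0
  rcases sW_cases (S := S) θ with h | h <;> rw [h] at hWθ <;> simp at hWθ <;>
    rw [hWθ] at hpar <;> push_cast at hpar <;> omega

lemma mem_CC {θ x : G (k + d)} : x ∈ CC S θ ↔ x ∈ S ∧ sW S θ * ch θ x = -1 := by
  unfold CC; simp

lemma mem_Dx {θ x : G (k + d)} : θ ∈ Dx S x ↔ θ ∈ AA S ∧ sW S θ * ch θ x = -1 := by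
  unfold Dx; simp

lemma al_cases (θ x : G (k + d)) : sW S θ * ch θ x = 1 ∨ sW S θ * ch θ x = -1 := by
  rcases sW_cases (S := S) θ with h | h <;> rcases ch_cases θ x with h' | h' <;>
    rw [h, h'] <;> norm_num

lemma one_sub_al (θ x : G (k + d)) :
    1 - sW S θ * ch θ x = if sW S θ * ch θ x = -1 then 2 else 0 := by
  rcases sW_cases (S := S) θ with h | h <;> rcases ch_cases θ x with h' | h' <;>
    rw [h, h'] <;> norm_num

include hcard hW in
lemma msum {x : G (k + d)} (hx : x ∈ S) :
    ∑ θ ∈ AA S, sW S θ * ch θ x = 2 ^ k - 2 := by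
  have hinv := inv1 (S := S) x
  rw [if_pos hx] at hinv
  rw [sum_split (S := S) (fun γ => W S γ * ch γ x)
    (fun γ h0 hA => by show W S γ * ch γ x = 0; rw [W_off_A h0 hA]; ring)] at hinv
  rw [ch_zero_left, W0_val hcard, mul_one] at hinv
  have he : ∑ γ ∈ AA S, W S γ * ch γ x = 2^d * ∑ γ ∈ AA S, sW S γ * ch γ x := by
    rw [Finset.mul_sum]
    refine Finset.sum_congr rfl fun θ hθ => ?_
    rw [W_on_A hW hθ]; ring
  rw [he] at hinv
  have h2 : (2:ℤ)^d * (2 + ∑ γ ∈ AA S, sW S γ * ch γ x) = 2^d * 2^k := by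
    rw [← pow_add]
    have : d + k = k + d := by omega
    rw [this, ← hinv, pow_succ]
    ring
  have h3 := mul_left_cancel₀ (show ((2:ℤ)^d) ≠ 0 by positivity) h2
  linarith

include hcard hW in
lemma Ccard {θ : G (k + d)} (hθ : θ ∈ AA S) : 2 * ((CC S θ).card : ℤ) = 2 ^ d := by
  have hsum : ∑ x ∈ S, (1 - sW S θ * ch θ x) = 2 * ((CC S θ).card : ℤ) := by
    rw [Finset.sum_congr rfl (fun x _ => one_sub_al (S := S) θ x)]
    rw [Finset.sum_ite, Finset.sum_const, Finset.sum_const]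
    unfold CC
    simp [mul_comm]
  have hsum2 : ∑ x ∈ S, (1 - sW S θ * ch θ x) = (S.card : ℤ) - sW S θ * W S θ := by
    rw [Finset.sum_sub_distrib, Finset.sum_const, nsmul_eq_mul, mul_one, ← Finset.mul_sum]
    rfl
  rw [hsum2, sW_mul_W hW hθ, hcard] at hsum
  rw [← hsum]
  push_cast
  ring

include hcard hW in
lemma Dxcard {x : G (k + d)} (hx : x ∈ S) : 2 * ((Dx S x).card : ℤ) = 2 ^ k - 2 := by
  have hsum : ∑ θ ∈ AA S, (1 - sW S θ * ch θ x) = 2 * ((Dx S x).card : ℤ) := by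
    rw [Finset.sum_congr rfl (fun θ _ => one_sub_al (S := S) θ x)]
    rw [Finset.sum_ite, Finset.sum_const, Finset.sum_const]
    unfold Dx
    simp [mul_comm]
  have hsum2 : ∑ θ ∈ AA S, (1 - sW S θ * ch θ x) = ((AA S).card : ℤ) - (2^k - 2) := by
    rw [Finset.sum_sub_distrib, Finset.sum_const, nsmul_eq_mul, mul_one, msum hcard hW hx]
  rw [hsum2, Acard' hcard hW] at hsum
  rw [← hsum]
  ring

include hcard hW in
lemma pair_id {θ θ' : G (k + d)} (hθ : θ ∈ AA S) (hθ' : θ' ∈ AA S) :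
    4 * (((CC S θ) ∩ (CC S θ')).card : ℤ) = sW S θ * sW S θ' * W S (θ + θ') := by
  have hpoint : ∀ x, (1 - sW S θ * ch θ x) * (1 - sW S θ' * ch θ' x) =
      if (sW S θ * ch θ x = -1 ∧ sW S θ' * ch θ' x = -1) then 4 else 0 := by
    intro x
    rw [one_sub_al, one_sub_al]
    by_cases h1 : sW S θ * ch θ x = -1 <;> by_cases h2 : sW S θ' * ch θ' x = -1 <;>
      simp [h1, h2]
  have hsum : ∑ x ∈ S, (1 - sW S θ * ch θ x) * (1 - sW S θ' * ch θ' x) =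
      4 * (((CC S θ) ∩ (CC S θ')).card : ℤ) := by
    rw [Finset.sum_congr rfl (fun x _ => hpoint x)]
    rw [Finset.sum_ite, Finset.sum_const, Finset.sum_const]
    have hff : (CC S θ) ∩ (CC S θ') = S.filter (fun x => sW S θ * ch θ x = -1 ∧ sW S θ' * ch θ' x = -1) := by
      ext x
      simp only [Finset.mem_inter, mem_CC, Finset.mem_filter]
      tauto
    rw [hff]
    simp [mul_comm]
  have hexp : ∀ x, (1 - sW S θ * ch θ x) * (1 - sW S θ' * ch θ' x) =
      1 - sW S θ * ch θ x - sW S θ' * ch θ' x + sW S θ * sW S θ' * ch (θ + θ') x := by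
    intro x
    rw [ch_add_left]
    ring
  have hsum2 : ∑ x ∈ S, (1 - sW S θ * ch θ x) * (1 - sW S θ' * ch θ' x) =
      (S.card : ℤ) - sW S θ * W S θ - sW S θ' * W S θ' + sW S θ * sW S θ' * W S (θ + θ') := by
    rw [Finset.sum_congr rfl fun x _ => hexp x]
    simp only [Finset.sum_add_distrib, Finset.sum_sub_distrib, Finset.sum_const,
      nsmul_eq_mul, mul_one, ← Finset.mul_sum]
    rfl
  rw [hsum2, sW_mul_W hW hθ, sW_mul_W hW hθ', hcard] at hsum
  rw [← hsum]
  push_cast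
  ring

include hcard hW in
lemma pair_nonempty {θ θ' : G (k + d)} (hθ : θ ∈ AA S) (hθ' : θ' ∈ AA S) (hne : θ ≠ θ')
    (hI : ((CC S θ) ∩ (CC S θ')).Nonempty) :
    4 * (((CC S θ) ∩ (CC S θ')).card : ℤ) = 2 ^ d ∧ 2 ≤ d := by
  have hid := pair_id hcard hW hθ hθ'
  have hσ : θ + θ' ≠ 0 := fun h => hne ((add_eq_zero_iff_eq θ θ').1 h)
  have hpos : (1:ℤ) ≤ ((CC S θ) ∩ (CC S θ')).card := by
    exact_mod_cast Finset.card_pos.2 hI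
  have hp : (0:ℤ) < 2^d := by positivity
  have hval : sW S θ * sW S θ' * W S (θ + θ') = 2^d := by
    rcases hW _ hσ with h | h | h
    · exfalso
      rw [h, mul_zero] at hid
      omega
    all_goals (
      rcases sW_cases (S := S) θ with h1 | h1 <;>
      rcases sW_cases (S := S) θ' with h2 | h2 <;>
      rw [h, h1, h2] at hid ⊢ <;> ring_nf at hid ⊢ <;>
      first | rfl | trivial | (exfalso; omega) | omega | linarith)
  rw [hval] at hid
  refine ⟨hid, ?_⟩
  by_contra hdlt
  push_neg at hdlt
  have h2 : (2:ℤ)^d ≤ 2^1 := pow_le_pow_right₀ (by norm_num) (by omega)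
  norm_num at h2
  omega

include hcard hW in
lemma CC_nonempty {θ : G (k + d)} (hθ : θ ∈ AA S) : (CC S θ).Nonempty := by
  rw [← Finset.card_pos]
  have h1 := Ccard hcard hW hθ
  have hp : (0:ℤ) < 2^d := by positivity
  by_contra h
  push_neg at h
  have h0 : (CC S θ).card = 0 := by omega
  rw [h0] at h1
  simp at h1
  omega

include hcard hW in
lemma CC_inj {θ θ' : G (k + d)} (hθ : θ ∈ AA S) (hθ' : θ' ∈ AA S) (hne : θ ≠ θ') :
    CC S θ ≠ CC S θ' := by
  intro he
  have hI : ((CC S θ) ∩ (CC S θ')).Nonempty := by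
    rw [he, Finset.inter_self]
    exact CC_nonempty hcard hW hθ'
  have h4 := (pair_nonempty hcard hW hθ hθ' hne hI).1
  rw [he, Finset.inter_self] at h4
  have h2 := Ccard hcard hW hθ'
  have hp : (0:ℤ) < 2^d := by positivity
  omega


include hcard hW in
lemma WCC {θ : G (k + d)} (hθ : θ ∈ AA S) (γ : G (k + d)) :
    2 * W (CC S θ) γ = W S γ - sW S θ * W S (γ + θ) := by
  have hpoint : ∀ x : G (k + d), (1 - sW S θ * ch θ x) * ch γ x =
      if sW S θ * ch θ x = -1 then 2 * ch γ x else 0 := by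
    intro x
    rw [one_sub_al (S := S) θ x]
    split_ifs <;> ring
  have h1 : ∑ x ∈ S, (1 - sW S θ * ch θ x) * ch γ x = 2 * W (CC S θ) γ := by
    rw [Finset.sum_congr rfl (fun x _ => hpoint x), ← Finset.sum_filter]
    unfold W CC
    rw [Finset.mul_sum]
  have h2 : ∑ x ∈ S, (1 - sW S θ * ch θ x) * ch γ x = W S γ - sW S θ * W S (γ + θ) := by
    have hexp : ∀ x : G (k + d), (1 - sW S θ * ch θ x) * ch γ x =
        ch γ x - sW S θ * ch (γ + θ) x := by
      intro x
      rw [ch_add_left]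
      ring
    rw [Finset.sum_congr rfl (fun x _ => hexp x), Finset.sum_sub_distrib, ← Finset.mul_sum]
    rfl
  rw [← h1, h2]

include hk hcard hW in
lemma CCval {θ : G (k + d)} (hθ : θ ∈ AA S) (γ : G (k + d)) :
    W (CC S θ) γ = 0 ∨ W (CC S θ) γ = (CC S θ).card ∨ W (CC S θ) γ = -(CC S θ).card := by
  set c : ℤ := ((CC S θ).card : ℤ) with hc
  have h2c : 2 * c = 2 ^ d := Ccard hcard hW hθ
  have hcpos : 0 < c := by
    have := CC_nonempty hcard hW hθ
    rw [hc]
    exact_mod_cast Finset.card_pos.2 this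
  have hWC := WCC hcard hW hθ γ
  have habs := Wabs (CC S θ) γ
  rw [abs_le] at habs
  obtain ⟨habs1, habs2⟩ := habs
  rw [← hc] at habs1 habs2
  by_cases h0 : γ = 0
  · subst h0
    rw [W_zero]
    right; left; rfl
  by_cases hγθ : γ = θ
  · subst hγθ
    rw [W_on_A hW hθ, add_self_zero, W0_val hcard] at hWC
    rcases sW_cases (S := S) γ with h | h <;> rw [h] at hWC <;> ring_nf at hWC <;> omega
  · have hγθ0 : γ + θ ≠ 0 := fun h => hγθ ((add_eq_zero_iff_eq γ θ).1 h)
    rcases hW γ h0 with h1 | h1 | h1 <;> rcases hW _ hγθ0 with h2 | h2 | h2 <;>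
      rw [h1, h2] at hWC <;>
      rcases sW_cases (S := S) θ with h3 | h3 <;> rw [h3] at hWC <;> ring_nf at hWC <;>
      omega

include hk hcard hW in
lemma closureC {θ : G (k + d)} (hθ : θ ∈ AA S) :
    ∀ x ∈ CC S θ, ∀ y ∈ CC S θ, ∀ z ∈ CC S θ, x + y + z ∈ CC S θ :=
  closure3 (CC_nonempty hcard hW hθ) (CCval hk hcard hW hθ)

include hcard hW in
lemma triple_id {θ₁ θ₂ θ₃ : G (k + d)} (h1 : θ₁ ∈ AA S) (h2 : θ₂ ∈ AA S) (h3 : θ₃ ∈ AA S)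
    (h12 : θ₁ ≠ θ₂) (h13 : θ₁ ≠ θ₃) (h23 : θ₂ ≠ θ₃)
    (hI12 : ((CC S θ₁) ∩ (CC S θ₂)).Nonempty)
    (hI13 : ((CC S θ₁) ∩ (CC S θ₃)).Nonempty)
    (hI23 : ((CC S θ₂) ∩ (CC S θ₃)).Nonempty) :
    8 * (((CC S θ₁) ∩ (CC S θ₂) ∩ (CC S θ₃)).card : ℤ) =
      2^(d+1) - sW S θ₁ * sW S θ₂ * sW S θ₃ * W S (θ₁ + θ₂ + θ₃) := by
  set a₁ := fun x => sW S θ₁ * ch θ₁ x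
  set a₂ := fun x => sW S θ₂ * ch θ₂ x
  set a₃ := fun x => sW S θ₃ * ch θ₃ x
  have hpoint : ∀ x, (1 - a₁ x) * (1 - a₂ x) * (1 - a₃ x) =
      if (a₁ x = -1 ∧ a₂ x = -1 ∧ a₃ x = -1) then 8 else 0 := by
    intro x
    simp only [a₁, a₂, a₃]
    rcases al_cases (S := S) θ₁ x with e1 | e1 <;> rcases al_cases (S := S) θ₂ x with e2 | e2 <;>
      rcases al_cases (S := S) θ₃ x with e3 | e3 <;> simp only [e1, e2, e3] <;> norm_num
  have hset : (CC S θ₁) ∩ (CC S θ₂) ∩ (CC S θ₃) =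
      S.filter (fun x => a₁ x = -1 ∧ a₂ x = -1 ∧ a₃ x = -1) := by
    ext x
    simp only [Finset.mem_inter, mem_CC, Finset.mem_filter, a₁, a₂, a₃]
    tauto
  have hsum : ∑ x ∈ S, (1 - a₁ x) * (1 - a₂ x) * (1 - a₃ x) =
      8 * (((CC S θ₁) ∩ (CC S θ₂) ∩ (CC S θ₃)).card : ℤ) := by
    rw [Finset.sum_congr rfl (fun x _ => hpoint x), Finset.sum_ite, Finset.sum_const,
      Finset.sum_const, hset]
    simp [mul_comm]
  have hexp : ∀ x, (1 - a₁ x) * (1 - a₂ x) * (1 - a₃ x) =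
      1 - a₁ x - a₂ x - a₃ x
      + sW S θ₁ * sW S θ₂ * ch (θ₁ + θ₂) x
      + sW S θ₁ * sW S θ₃ * ch (θ₁ + θ₃) x
      + sW S θ₂ * sW S θ₃ * ch (θ₂ + θ₃) x
      - sW S θ₁ * sW S θ₂ * sW S θ₃ * ch (θ₁ + θ₂ + θ₃) x := by
    intro x
    simp only [a₁, a₂, a₃]
    have c12 : ch (θ₁ + θ₂) x = ch θ₁ x * ch θ₂ x := ch_add_left _ _ _
    have c13 : ch (θ₁ + θ₃) x = ch θ₁ x * ch θ₃ x := ch_add_left _ _ _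
    have c23 : ch (θ₂ + θ₃) x = ch θ₂ x * ch θ₃ x := ch_add_left _ _ _
    have c123 : ch (θ₁ + θ₂ + θ₃) x = ch θ₁ x * ch θ₂ x * ch θ₃ x := by
      rw [ch_add_left, ch_add_left]
    rw [c12, c13, c23, c123]
    ring
  have hsum2 : ∑ x ∈ S, (1 - a₁ x) * (1 - a₂ x) * (1 - a₃ x) =
      (S.card : ℤ) - sW S θ₁ * W S θ₁ - sW S θ₂ * W S θ₂ - sW S θ₃ * W S θ₃
      + sW S θ₁ * sW S θ₂ * W S (θ₁ + θ₂)
      + sW S θ₁ * sW S θ₃ * W S (θ₁ + θ₃)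
      + sW S θ₂ * sW S θ₃ * W S (θ₂ + θ₃)
      - sW S θ₁ * sW S θ₂ * sW S θ₃ * W S (θ₁ + θ₂ + θ₃) := by
    rw [Finset.sum_congr rfl (fun x _ => hexp x)]
    simp only [a₁, a₂, a₃, Finset.sum_add_distrib, Finset.sum_sub_distrib, Finset.sum_const,
      nsmul_eq_mul, mul_one, ← Finset.mul_sum]
    rfl
  have e12 := (pair_nonempty hcard hW h1 h2 h12 hI12).1
  have e13 := (pair_nonempty hcard hW h1 h3 h13 hI13).1
  have e23 := (pair_nonempty hcard hW h2 h3 h23 hI23).1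
  have p12 := pair_id hcard hW h1 h2
  have p13 := pair_id hcard hW h1 h3
  have p23 := pair_id hcard hW h2 h3
  rw [hsum2, sW_mul_W hW h1, sW_mul_W hW h2, sW_mul_W hW h3, ← p12, ← p13, ← p23,
    e12, e13, e23, hcard] at hsum
  rw [← hsum]
  push_cast
  ring

end core

end

section smhelp

variable {n : ℕ}

lemma mem_span_closed {K : Finset (G n)} (h0 : (0:G n) ∈ K)
    (hadd : ∀ u ∈ K, ∀ v ∈ K, u + v ∈ K) {u : G n} :
    u ∈ Submodule.span (ZMod 2) (↑K : Set (G n)) ↔ u ∈ K := by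
  constructor
  · intro h
    induction h using Submodule.span_induction with
    | mem a ha => exact ha
    | zero => exact h0
    | add a b _ _ ha hb => exact hadd _ ha _ hb
    | smul c a _ ha =>
        rcases zmod2_cases c with hc | hc
        · rw [hc, zero_smul]; exact h0
        · rw [hc, one_smul]; exact ha
  · intro h
    exact Submodule.subset_span h

lemma card_of_SM {U : Submodule (ZMod 2) (G n)} {K : Finset (G n)}
    (h : ∀ x, x ∈ U ↔ x ∈ K) : Nat.card U = K.card := by
  rw [← Set.ncard_coe_finset K, ← Nat.card_coe_set_eq]
  exact Nat.card_congr (Equiv.subtypeEquivRight (fun x => by simpa using h x))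

lemma card_of_rank (U : Submodule (ZMod 2) (G n)) :
    Nat.card U = 2 ^ (Module.finrank (ZMod 2) U) := by
  have hft : Fintype U := Fintype.ofFinite _
  rw [Nat.card_eq_fintype_card]
  have h2 : Fintype.card U = Fintype.card (ZMod 2) ^ Module.finrank (ZMod 2) U :=
    Module.card_eq_pow_finrank
  rwa [ZMod.card] at h2

lemma pow_card_of_SM {U : Submodule (ZMod 2) (G n)} {K : Finset (G n)}
    (h : ∀ x, x ∈ U ↔ x ∈ K) : K.card = 2 ^ (Module.finrank (ZMod 2) U) := by
  rw [← card_of_SM h, card_of_rank]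

lemma image_add_inter (x : G n) (F F' : Finset (G n)) :
    (F ∩ F').image (fun u => x + u) = F.image (fun u => x + u) ∩ F'.image (fun u => x + u) :=
  Finset.image_inter _ _ (add_right_injective x)

lemma card_image_add (x : G n) (F : Finset (G n)) :
    (F.image (fun u => x + u)).card = F.card :=
  Finset.card_image_of_injective _ (add_right_injective x)

lemma three_pow_ne (a b : ℕ) : 2^a ≠ 3 * 2^b := by
  intro h
  rcases le_or_gt a b with hab | hab
  · have h1 : (2:ℕ)^a ≤ 2^b := Nat.pow_le_pow_right (by norm_num) hab
    have h2 : (0:ℕ) < 2^b := Nat.pow_pos (by norm_num)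
    omega
  · have h1 : (2:ℕ)^a = 2^(a-b) * 2^b := by rw [← pow_add]; congr 1; omega
    rw [h1] at h
    have h2 : (0:ℕ) < 2^b := Nat.pow_pos (by norm_num)
    have h3 : (2:ℕ)^(a-b) = 3 := by
      have := Nat.eq_of_mul_eq_mul_right h2 h
      omega
    have h4 : 2 ∣ 2^(a-b) := dvd_pow_self 2 (by
      rcases Nat.eq_zero_or_pos (a-b) with h5 | h5
      · rw [h5] at h3; norm_num at h3
      · omega)
    omega

def sum2 (F F' : Finset (G n)) : Finset (G n) := (F ×ˢ F').image (fun p => p.1 + p.2)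

lemma mem_sum2 {F F' : Finset (G n)} {u : G n} :
    u ∈ sum2 F F' ↔ ∃ a ∈ F, ∃ b ∈ F', a + b = u := by
  simp [sum2, Finset.mem_image, Finset.mem_product]
  constructor
  · rintro ⟨a, b, ⟨ha, hb⟩, h⟩; exact ⟨a, ha, b, hb, h⟩
  · rintro ⟨a, ha, b, hb, h⟩; exact ⟨a, b, ⟨ha, hb⟩, h⟩

end smhelp

noncomputable section core2

variable {k d : ℕ} {S : Finset (G (k + d))}
variable (hk : 5 ≤ k)
variable (hcard : S.card = 2 ^ (d + 1))
variable (hW : ∀ γ : G (k + d), γ ≠ 0 → W S γ = 0 ∨ W S γ = 2 ^ d ∨ W S γ = -2 ^ d)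

def KF (S : Finset (G (k + d))) (θ : G (k + d)) : Finset (G (k + d)) := dirF (CC S θ)

def VV (S : Finset (G (k + d))) (θ : G (k + d)) : Submodule (ZMod 2) (G (k + d)) :=
  Submodule.span (ZMod 2) (↑(KF S θ) : Set (G (k + d)))

include hk hcard hW in
lemma KF_zero {θ : G (k + d)} (hθ : θ ∈ AA S) : (0 : G (k+d)) ∈ KF S θ :=
  dirF_zero_mem (CC_nonempty hcard hW hθ)

include hk hcard hW in
lemma KF_add {θ : G (k + d)} (hθ : θ ∈ AA S) :
    ∀ u ∈ KF S θ, ∀ v ∈ KF S θ, u + v ∈ KF S θ := fun u hu v hv =>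
  dirF_add_mem (closureC hk hcard hW hθ) hu hv

include hk hcard hW in
lemma mem_VV {θ : G (k + d)} (hθ : θ ∈ AA S) {u : G (k + d)} :
    u ∈ VV S θ ↔ u ∈ KF S θ :=
  mem_span_closed (KF_zero hk hcard hW hθ) (KF_add hk hcard hW hθ)

include hk hcard hW in
lemma CC_eq_image {θ : G (k + d)} (hθ : θ ∈ AA S) {x : G (k + d)} (hx : x ∈ CC S θ) :
    (KF S θ).image (fun u => x + u) = CC S θ :=
  dirF_image (closureC hk hcard hW hθ) hx

include hk hcard hW in
lemma rank_VV {θ : G (k + d)} (hθ : θ ∈ AA S) :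
    Module.finrank (ZMod 2) (VV S θ) + 1 = d := by
  have h1 : (KF S θ).card = 2 ^ (Module.finrank (ZMod 2) (VV S θ)) :=
    pow_card_of_SM (fun u => mem_VV hk hcard hW hθ)
  obtain ⟨x, hx⟩ := CC_nonempty hcard hW hθ
  have h2 : (KF S θ).card = (CC S θ).card := by
    rw [← CC_eq_image hk hcard hW hθ hx, card_image_add]
  have h3 : 2 * ((CC S θ).card : ℤ) = 2^d := Ccard hcard hW hθ
  have h4 : 2 * (CC S θ).card = 2^d := by exact_mod_cast h3
  have h5 : (2:ℕ) ^ (Module.finrank (ZMod 2) (VV S θ) + 1) = 2^d := by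
    rw [pow_succ]
    omega
  exact Nat.pow_right_injective (le_refl 2) h5

include hk hcard hW in
lemma inter_eq_imageK {θ θ' : G (k + d)} (hθ : θ ∈ AA S) (hθ' : θ' ∈ AA S)
    {x : G (k + d)} (hx : x ∈ CC S θ) (hx' : x ∈ CC S θ') :
    ((KF S θ) ∩ (KF S θ')).image (fun u => x + u) = (CC S θ) ∩ (CC S θ') := by
  rw [image_add_inter, CC_eq_image hk hcard hW hθ hx, CC_eq_image hk hcard hW hθ' hx']

include hk hcard hW in
lemma rank_inf {θ θ' : G (k + d)} (hθ : θ ∈ AA S) (hθ' : θ' ∈ AA S) (hne : θ ≠ θ')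
    {x : G (k + d)} (hx : x ∈ CC S θ) (hx' : x ∈ CC S θ') :
    Module.finrank (ZMod 2) ↥((VV S θ) ⊓ (VV S θ')) + 2 = d := by
  have hmem : ∀ u, u ∈ (VV S θ) ⊓ (VV S θ') ↔ u ∈ (KF S θ) ∩ (KF S θ') := by
    intro u
    rw [Submodule.mem_inf, Finset.mem_inter, mem_VV hk hcard hW hθ, mem_VV hk hcard hW hθ']
  have h1 : ((KF S θ) ∩ (KF S θ')).card = 2 ^ (Module.finrank (ZMod 2) ↥((VV S θ) ⊓ (VV S θ'))) :=
    pow_card_of_SM hmem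
  have h2 : ((KF S θ) ∩ (KF S θ')).card = ((CC S θ) ∩ (CC S θ')).card := by
    rw [← inter_eq_imageK hk hcard hW hθ hθ' hx hx', card_image_add]
  have h3 := (pair_nonempty hcard hW hθ hθ' hne ⟨x, Finset.mem_inter.2 ⟨hx, hx'⟩⟩).1
  have h4 : 4 * ((CC S θ) ∩ (CC S θ')).card = 2^d := by exact_mod_cast h3
  have h5 : (2:ℕ) ^ (Module.finrank (ZMod 2) ↥((VV S θ) ⊓ (VV S θ')) + 2) = 2^d := by
    rw [pow_add]
    omega
  exact Nat.pow_right_injective (le_refl 2) h5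

include hk hcard hW in
lemma mem_Dx_A {x θ : G (k + d)} (hθ : θ ∈ Dx S x) : θ ∈ AA S := (mem_Dx.1 hθ).1

include hk hcard hW in
lemma mem_Dx_CC {x θ : G (k + d)} (hx : x ∈ S) (hθ : θ ∈ Dx S x) : x ∈ CC S θ :=
  mem_CC.2 ⟨hx, (mem_Dx.1 hθ).2⟩

include hk hcard hW in
lemma Dx_card_nat {x : G (k + d)} (hx : x ∈ S) : 2 * (Dx S x).card + 2 = 2^k := by
  have h := Dxcard hcard hW hx
  have h2 : (2:ℤ)*(Dx S x).card + 2 = 2^k := by linarith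
  exact_mod_cast h2

include hk hcard hW in
lemma Dx_big {x : G (k + d)} (hx : x ∈ S) : 8 ≤ (Dx S x).card := by
  have h := Dx_card_nat hk hcard hW hx
  have h32 : (32:ℕ) ≤ 2^k := by
    calc (32:ℕ) = 2^5 := by norm_num
      _ ≤ 2^k := Nat.pow_le_pow_right (by norm_num) hk
  omega

lemma inter3_sub12 (a b c : Finset (G (k+d))) : a ∩ b ∩ c ⊆ a ∩ b := Finset.inter_subset_left

lemma inter3_sub13 (a b c : Finset (G (k+d))) : a ∩ b ∩ c ⊆ a ∩ c := by
  intro u hu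
  simp only [Finset.mem_inter] at hu ⊢
  tauto

lemma inter3_sub23 (a b c : Finset (G (k+d))) : a ∩ b ∩ c ⊆ b ∩ c := by
  intro u hu
  simp only [Finset.mem_inter] at hu ⊢
  tauto

include hk hcard hW in
lemma inter3_eq_imageK {θ₁ θ₂ θ₃ : G (k + d)} (h1 : θ₁ ∈ AA S) (h2 : θ₂ ∈ AA S) (h3 : θ₃ ∈ AA S)
    {x : G (k + d)} (hx1 : x ∈ CC S θ₁) (hx2 : x ∈ CC S θ₂) (hx3 : x ∈ CC S θ₃) :
    ((KF S θ₁) ∩ (KF S θ₂) ∩ (KF S θ₃)).image (fun u => x + u) =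
      (CC S θ₁) ∩ (CC S θ₂) ∩ (CC S θ₃) := by
  rw [image_add_inter, image_add_inter, CC_eq_image hk hcard hW h1 hx1,
    CC_eq_image hk hcard hW h2 hx2, CC_eq_image hk hcard hW h3 hx3]

include hk hcard hW in
lemma rank_inf3 {θ₁ θ₂ θ₃ : G (k + d)} (h1 : θ₁ ∈ AA S) (h2 : θ₂ ∈ AA S) (h3 : θ₃ ∈ AA S)
    {x : G (k + d)} (hx1 : x ∈ CC S θ₁) (hx2 : x ∈ CC S θ₂) (hx3 : x ∈ CC S θ₃) :
    ((CC S θ₁) ∩ (CC S θ₂) ∩ (CC S θ₃)).card =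
      2 ^ (Module.finrank (ZMod 2) ↥((VV S θ₁ ⊓ VV S θ₃) ⊓ (VV S θ₂ ⊓ VV S θ₃))) := by
  have hmem : ∀ u, u ∈ (VV S θ₁ ⊓ VV S θ₃) ⊓ (VV S θ₂ ⊓ VV S θ₃) ↔
      u ∈ (KF S θ₁) ∩ (KF S θ₂) ∩ (KF S θ₃) := by
    intro u
    simp only [Submodule.mem_inf, Finset.mem_inter,
      mem_VV hk hcard hW h1, mem_VV hk hcard hW h2, mem_VV hk hcard hW h3]
    tauto
  have h1' := pow_card_of_SM hmem
  rw [← h1', ← inter3_eq_imageK hk hcard hW h1 h2 h3 hx1 hx2 hx3, card_image_add]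

include hk hcard hW in
lemma triple_card {x : G (k + d)} (hx : x ∈ S) {θ₁ θ₂ θ₃ : G (k + d)}
    (h1 : θ₁ ∈ Dx S x) (h2 : θ₂ ∈ Dx S x) (h3 : θ₃ ∈ Dx S x)
    (h12 : θ₁ ≠ θ₂) (h13 : θ₁ ≠ θ₃) (h23 : θ₂ ≠ θ₃) :
    8 * (((CC S θ₁) ∩ (CC S θ₂) ∩ (CC S θ₃)).card : ℤ) = 2^d ∨
    8 * (((CC S θ₁) ∩ (CC S θ₂) ∩ (CC S θ₃)).card : ℤ) = 2^(d+1) := by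
  have hA1 := mem_Dx_A hk hcard hW h1
  have hA2 := mem_Dx_A hk hcard hW h2
  have hA3 := mem_Dx_A hk hcard hW h3
  have hx1 := mem_Dx_CC hk hcard hW hx h1
  have hx2 := mem_Dx_CC hk hcard hW hx h2
  have hx3 := mem_Dx_CC hk hcard hW hx h3
  have hI12 : ((CC S θ₁) ∩ (CC S θ₂)).Nonempty := ⟨x, Finset.mem_inter.2 ⟨hx1, hx2⟩⟩
  have hI13 : ((CC S θ₁) ∩ (CC S θ₃)).Nonempty := ⟨x, Finset.mem_inter.2 ⟨hx1, hx3⟩⟩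
  have hI23 : ((CC S θ₂) ∩ (CC S θ₃)).Nonempty := ⟨x, Finset.mem_inter.2 ⟨hx2, hx3⟩⟩
  have hid := triple_id hcard hW hA1 hA2 hA3 h12 h13 h23 hI12 hI13 hI23
  set c : ℤ := (((CC S θ₁) ∩ (CC S θ₂) ∩ (CC S θ₃)).card : ℤ) with hcdef
  have hcpos : 1 ≤ c := by
    rw [hcdef]
    exact_mod_cast Finset.card_pos.2 ⟨x, by
      simp only [Finset.mem_inter]
      exact ⟨⟨hx1, hx2⟩, hx3⟩⟩
  have hc12 := (pair_nonempty hcard hW hA1 hA2 h12 hI12).1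
  have hsub : c ≤ (((CC S θ₁) ∩ (CC S θ₂)).card : ℤ) := by
    rw [hcdef]
    exact_mod_cast Finset.card_le_card (inter3_sub12 _ _ _)
  have hp : (0:ℤ) < 2^d := by positivity
  by_cases hσ : θ₁ + θ₂ + θ₃ = 0
  · exfalso
    rw [hσ, W0_val hcard] at hid
    rcases sW_cases (S := S) θ₁ with e1 | e1 <;> rcases sW_cases (S := S) θ₂ with e2 | e2 <;>
      rcases sW_cases (S := S) θ₃ with e3 | e3 <;> rw [e1, e2, e3] at hid <;>
      ring_nf at hid <;> omega
  · rcases hW _ hσ with h | h | h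
    · right
      rw [h, mul_zero] at hid
      linarith
    all_goals (
      have hpow : ∃ j : ℕ, (((CC S θ₁) ∩ (CC S θ₂) ∩ (CC S θ₃)).card) = 2^j :=
        ⟨_, rank_inf3 hk hcard hW hA1 hA2 hA3 hx1 hx2 hx3⟩
      obtain ⟨j, hj⟩ := hpow
      rcases sW_cases (S := S) θ₁ with e1 | e1 <;> rcases sW_cases (S := S) θ₂ with e2 | e2 <;>
        rcases sW_cases (S := S) θ₃ with e3 | e3 <;> rw [e1, e2, e3, h] at hid <;> ring_nf at hid <;>
      first
        | (left; omega)
        | (right; omega)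
        | (exfalso
           have h3p : 8 * c = 3 * 2^d := by omega
           have h3n : 8 * (((CC S θ₁) ∩ (CC S θ₂) ∩ (CC S θ₃)).card) = 3 * 2^d := by
             exact_mod_cast h3p
           rw [hj] at h3n
           have : (2:ℕ)^(j+3) = 3 * 2^d := by rw [pow_add]; omega
           exact three_pow_ne (j+3) d this))

include hk hcard hW in
lemma Vle_of_quarter {x : G (k + d)} (hx : x ∈ S) {a b c : G (k + d)}
    (ha : a ∈ Dx S x) (hb : b ∈ Dx S x) (hc : c ∈ Dx S x)
    (hab : a ≠ b) (hac : a ≠ c) (hbc : b ≠ c)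
    (hq : 8 * (((CC S a) ∩ (CC S b) ∩ (CC S c)).card : ℤ) = 2^d) :
    VV S c ≤ VV S a ⊔ VV S b := by
  have hAa := mem_Dx_A hk hcard hW ha
  have hAb := mem_Dx_A hk hcard hW hb
  have hAc := mem_Dx_A hk hcard hW hc
  have hxa := mem_Dx_CC hk hcard hW hx ha
  have hxb := mem_Dx_CC hk hcard hW hx hb
  have hxc := mem_Dx_CC hk hcard hW hx hc
  have rAC := rank_inf hk hcard hW hAa hAc hac hxa hxc
  have rBC := rank_inf hk hcard hW hAb hAc hbc hxb hxc
  have rC := rank_VV hk hcard hW hAc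
  have h3card := rank_inf3 hk hcard hW hAa hAb hAc hxa hxb hxc
  have r3 : Module.finrank (ZMod 2) ↥((VV S a ⊓ VV S c) ⊓ (VV S b ⊓ VV S c)) + 3 = d := by
    have hq2 : 8 * (((CC S a) ∩ (CC S b) ∩ (CC S c)).card) = 2^d := by exact_mod_cast hq
    rw [h3card] at hq2
    have : (2:ℕ) ^ (Module.finrank (ZMod 2) ↥((VV S a ⊓ VV S c) ⊓ (VV S b ⊓ VV S c)) + 3) = 2^d := by
      rw [pow_add]
      omega
    exact Nat.pow_right_injective (le_refl 2) this
  have hrsup := Submodule.finrank_sup_add_finrank_inf_eq (VV S a ⊓ VV S c) (VV S b ⊓ VV S c)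
  have hUle : (VV S a ⊓ VV S c) ⊔ (VV S b ⊓ VV S c) ≤ VV S c :=
    sup_le inf_le_right inf_le_right
  have hEq : (VV S a ⊓ VV S c) ⊔ (VV S b ⊓ VV S c) = VV S c :=
    Submodule.eq_of_le_of_finrank_le hUle (by omega)
  rw [← hEq]
  exact sup_le (le_trans inf_le_left le_sup_left) (le_trans inf_le_left le_sup_right)

include hk hcard hW in
lemma core_eq_of_half {x : G (k + d)} (hx : x ∈ S) {a b c : G (k + d)}
    (ha : a ∈ Dx S x) (hb : b ∈ Dx S x) (hc : c ∈ Dx S x)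
    (hab : a ≠ b) (hac : a ≠ c) (hbc : b ≠ c)
    (hh : 8 * (((CC S a) ∩ (CC S b) ∩ (CC S c)).card : ℤ) = 2^(d+1)) :
    CC S a ∩ CC S b = CC S a ∩ CC S c := by
  have hAa := mem_Dx_A hk hcard hW ha
  have hAb := mem_Dx_A hk hcard hW hb
  have hAc := mem_Dx_A hk hcard hW hc
  have hxa := mem_Dx_CC hk hcard hW hx ha
  have hxb := mem_Dx_CC hk hcard hW hx hb
  have hxc := mem_Dx_CC hk hcard hW hx hc
  have hIab : ((CC S a) ∩ (CC S b)).Nonempty := ⟨x, Finset.mem_inter.2 ⟨hxa, hxb⟩⟩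
  have hIac : ((CC S a) ∩ (CC S c)).Nonempty := ⟨x, Finset.mem_inter.2 ⟨hxa, hxc⟩⟩
  have hab4 := (pair_nonempty hcard hW hAa hAb hab hIab).1
  have hac4 := (pair_nonempty hcard hW hAa hAc hac hIac).1
  have habN : 4 * ((CC S a) ∩ (CC S b)).card = 2^d := by exact_mod_cast hab4
  have hacN : 4 * ((CC S a) ∩ (CC S c)).card = 2^d := by exact_mod_cast hac4
  have hhN : 8 * (((CC S a) ∩ (CC S b) ∩ (CC S c)).card) = 2^(d+1) := by exact_mod_cast hh
  have h1 : CC S a ∩ CC S b ∩ CC S c = CC S a ∩ CC S b := by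
    apply Finset.eq_of_subset_of_card_le (inter3_sub12 _ _ _)
    have : (2:ℕ)^(d+1) = 2 * 2^d := by rw [pow_succ]; ring
    omega
  have h2 : CC S a ∩ CC S b ∩ CC S c = CC S a ∩ CC S c := by
    apply Finset.eq_of_subset_of_card_le (inter3_sub13 _ _ _)
    have hsub : CC S a ∩ CC S b ∩ CC S c ⊆ CC S a ∩ CC S c := inter3_sub13 _ _ _
    have : (2:ℕ)^(d+1) = 2 * 2^d := by rw [pow_succ]; ring
    omega
  rw [← h1, h2]

include hk hcard hW in
lemma rank_sup_pair {x : G (k + d)} (hx : x ∈ S) {a b : G (k + d)}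
    (ha : a ∈ Dx S x) (hb : b ∈ Dx S x) (hab : a ≠ b) :
    Module.finrank (ZMod 2) ↥(VV S a ⊔ VV S b) = d := by
  have hAa := mem_Dx_A hk hcard hW ha
  have hAb := mem_Dx_A hk hcard hW hb
  have hxa := mem_Dx_CC hk hcard hW hx ha
  have hxb := mem_Dx_CC hk hcard hW hx hb
  have rA := rank_VV hk hcard hW hAa
  have rB := rank_VV hk hcard hW hAb
  have rI := rank_inf hk hcard hW hAa hAb hab hxa hxb
  have hrsup := Submodule.finrank_sup_add_finrank_inf_eq (VV S a) (VV S b)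
  omega

include hk hcard hW in
lemma dichotomy {x : G (k + d)} (hx : x ∈ S) {θ θ' : G (k + d)}
    (hθ : θ ∈ Dx S x) (hθ' : θ' ∈ Dx S x) (hne : θ ≠ θ') :
    ∀ η ∈ Dx S x, VV S η ≤ VV S θ ⊔ VV S θ' := by
  by_cases hQ : ∃ a ∈ Dx S x, ∃ b ∈ Dx S x, ∃ c ∈ Dx S x,
      a ≠ b ∧ a ≠ c ∧ b ≠ c ∧ 8 * (((CC S a) ∩ (CC S b) ∩ (CC S c)).card : ℤ) = 2^d
  · obtain ⟨a, ha, b, hb, c, hc, hab, hac, hbc, hq⟩ := hQ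
    have hallE0 : ∀ η ∈ Dx S x, VV S η ≤ VV S a ⊔ VV S b := by
      intro η hη
      by_cases hηa : η = a
      · subst hηa; exact le_sup_left
      by_cases hηb : η = b
      · subst hηb; exact le_sup_right
      have hcE : VV S c ≤ VV S a ⊔ VV S b :=
        Vle_of_quarter hk hcard hW hx ha hb hc hab hac hbc hq
      by_cases hq1 : 8 * (((CC S a) ∩ (CC S b) ∩ (CC S η)).card : ℤ) = 2^d
      · exact Vle_of_quarter hk hcard hW hx ha hb hη hab
          (fun h => hηa h.symm) (fun h => hηb h.symm) hq1
      by_cases hηc : η = c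
      · subst hηc; exact hcE
      by_cases hq2 : 8 * (((CC S a) ∩ (CC S c) ∩ (CC S η)).card : ℤ) = 2^d
      · have hle := Vle_of_quarter hk hcard hW hx ha hc hη hac
          (fun h => hηa h.symm) (fun h => hηc h.symm) hq2
        exact le_trans hle (sup_le le_sup_left hcE)
      · exfalso
        have hh1 := (triple_card hk hcard hW hx ha hb hη hab
          (fun h => hηa h.symm) (fun h => hηb h.symm)).resolve_left hq1
        have hh2 := (triple_card hk hcard hW hx ha hc hη hac
          (fun h => hηa h.symm) (fun h => hηc h.symm)).resolve_left hq2
        have e1 := core_eq_of_half hk hcard hW hx ha hb hη hab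
          (fun h => hηa h.symm) (fun h => hηb h.symm) hh1
        have e2 := core_eq_of_half hk hcard hW hx ha hc hη hac
          (fun h => hηa h.symm) (fun h => hηc h.symm) hh2
        have eZ : CC S a ∩ CC S b = CC S a ∩ CC S c := by rw [e1, e2]
        have eT : CC S a ∩ CC S b ∩ CC S c = CC S a ∩ CC S c := by
          rw [eZ, Finset.inter_assoc, Finset.inter_self]
        rw [eT] at hq
        have hxa := mem_Dx_CC hk hcard hW hx ha
        have hxc := mem_Dx_CC hk hcard hW hx hc
        have hIac : ((CC S a) ∩ (CC S c)).Nonempty := ⟨x, Finset.mem_inter.2 ⟨hxa, hxc⟩⟩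
        have h4 := (pair_nonempty hcard hW (mem_Dx_A hk hcard hW ha)
          (mem_Dx_A hk hcard hW hc) hac hIac).1
        have hpos : (1:ℤ) ≤ ((CC S a) ∩ (CC S c)).card := by
          exact_mod_cast Finset.card_pos.2 hIac
        omega
    have hE0 : VV S θ ⊔ VV S θ' ≤ VV S a ⊔ VV S b :=
      sup_le (hallE0 θ hθ) (hallE0 θ' hθ')
    have r1 := rank_sup_pair hk hcard hW hx hθ hθ' hne
    have r2 := rank_sup_pair hk hcard hW hx ha hb hab
    have hEq : VV S θ ⊔ VV S θ' = VV S a ⊔ VV S b :=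
      Submodule.eq_of_le_of_finrank_le hE0 (by omega)
    intro η hη
    rw [hEq]
    exact hallE0 η hη
  · exfalso
    push_neg at hQ
    have hHalf : ∀ a ∈ Dx S x, ∀ b ∈ Dx S x, ∀ c ∈ Dx S x, a ≠ b → a ≠ c → b ≠ c →
        8 * (((CC S a) ∩ (CC S b) ∩ (CC S c)).card : ℤ) = 2^(d+1) := fun a ha b hb c hc h1 h2 h3 =>
      (triple_card hk hcard hW hx ha hb hc h1 h2 h3).resolve_left (hQ a ha b hb c hc h1 h2 h3)
    have hcore : ∀ a ∈ Dx S x, ∀ b ∈ Dx S x, ∀ c ∈ Dx S x, a ≠ b → a ≠ c → b ≠ c →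
        CC S a ∩ CC S b = CC S a ∩ CC S c := fun a ha b hb c hc h1 h2 h3 =>
      core_eq_of_half hk hcard hW hx ha hb hc h1 h2 h3 (hHalf a ha b hb c hc h1 h2 h3)
    have hZθ : ∀ a ∈ Dx S x, a ≠ θ → CC S θ ∩ CC S a = CC S θ ∩ CC S θ' := by
      intro a ha haθ
      by_cases haθ' : a = θ'
      · subst haθ'; rfl
      · exact hcore θ hθ a ha θ' hθ' (fun h => haθ h.symm) hne haθ'
    have hZ : ∀ a ∈ Dx S x, ∀ b ∈ Dx S x, a ≠ b → CC S a ∩ CC S b = CC S θ ∩ CC S θ' := by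
      intro a ha b hb hab
      by_cases haθ : a = θ
      · subst haθ
        exact hZθ b hb (fun h => hab h.symm)
      · by_cases hbθ : b = θ
        · subst hbθ
          rw [Finset.inter_comm]
          exact hZθ a ha haθ
        · rw [hcore a ha b hb θ hθ hab haθ hbθ, Finset.inter_comm]
          exact hZθ a ha haθ
    -- sunflower mass contradiction
    set Z₀ := CC S θ ∩ CC S θ' with hZ₀def
    have hZsub : ∀ a ∈ Dx S x, Z₀ ⊆ CC S a := by
      intro a ha
      by_cases haθ : a = θ
      · subst haθ; exact Finset.inter_subset_left
      · rw [← hZθ a ha haθ]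
        exact Finset.inter_subset_right
    have hxZ : x ∈ Z₀ := Finset.mem_inter.2
      ⟨mem_Dx_CC hk hcard hW hx hθ, mem_Dx_CC hk hcard hW hx hθ'⟩
    have hZcard : 4 * Z₀.card = 2^d := by
      have h4 := (pair_nonempty hcard hW (mem_Dx_A hk hcard hW hθ)
        (mem_Dx_A hk hcard hW hθ') hne ⟨x, hxZ⟩).1
      exact_mod_cast h4
    have hdisj : ∀ a ∈ Dx S x, ∀ b ∈ Dx S x, a ≠ b →
        Disjoint (CC S a \ Z₀) (CC S b \ Z₀) := by
      intro a ha b hb hab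
      rw [Finset.disjoint_left]
      intro u hu hu'
      have h1 := Finset.mem_sdiff.1 hu
      have h2 := Finset.mem_sdiff.1 hu'
      have : u ∈ Z₀ := by
        rw [← hZ a ha b hb hab]
        exact Finset.mem_inter.2 ⟨h1.1, h2.1⟩
      exact h1.2 this
    set U := (Dx S x).biUnion (fun η => CC S η \ Z₀) with hUdef
    have hUcard : U.card = ∑ η ∈ Dx S x, (CC S η \ Z₀).card :=
      Finset.card_biUnion hdisj
    have hpiece : ∀ η ∈ Dx S x, (CC S η \ Z₀).card = 2^d / 4 := by
      intro η hη
      have hc2 : 2 * (CC S η).card = 2^d := by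
        have := Ccard hcard hW (mem_Dx_A hk hcard hW hη)
        exact_mod_cast this
      rw [Finset.card_sdiff_of_subset (hZsub η hη)]
      omega
    have hUcard2 : U.card = (Dx S x).card * (2^d / 4) := by
      rw [hUcard, Finset.sum_congr rfl hpiece, Finset.sum_const, smul_eq_mul]
    have hUS : U ⊆ S := by
      intro u hu
      obtain ⟨η, hη, hu2⟩ := Finset.mem_biUnion.1 hu
      exact Finset.mem_filter.1 ((Finset.mem_sdiff.1 hu2).1) |>.1
    have hUZ : Disjoint U Z₀ := by
      rw [Finset.disjoint_left]
      intro u hu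
      obtain ⟨η, hη, hu2⟩ := Finset.mem_biUnion.1 hu
      exact (Finset.mem_sdiff.1 hu2).2
    have hZS : Z₀ ⊆ S := fun u hu =>
      (Finset.mem_filter.1 (Finset.mem_inter.1 hu).1).1
    have hle : U.card + Z₀.card ≤ S.card := by
      rw [← Finset.card_union_of_disjoint hUZ]
      exact Finset.card_le_card (Finset.union_subset hUS hZS)
    have hbig := Dx_big hk hcard hW hx
    have hZpos : 1 ≤ Z₀.card := Finset.card_pos.2 ⟨x, hxZ⟩
    rw [hcard, hUcard2] at hle
    have h8 : 8 * (2^d / 4) ≤ (Dx S x).card * (2^d / 4) :=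
      Nat.mul_le_mul_right _ hbig
    have hd4 : 4 ∣ 2^d := by
      have : 4 * Z₀.card = 2^d := hZcard
      exact ⟨Z₀.card, this.symm⟩
    have h2d1 : (2:ℕ)^(d+1) = 2 * 2^d := by rw [pow_succ]; ring
    omega

def RA (S : Finset (G (k + d))) (w : G (k + d)) : ℤ := ∑ α ∈ AA S, ch α w

include hcard hW in
lemma m_id {y z : G (k + d)} (hy : y ∈ S) (hz : z ∈ S) :
    4 * (((Dx S y) ∩ (Dx S z)).card : ℤ) = RA S (y + z) := by
  have hpoint : ∀ θ, (1 - sW S θ * ch θ y) * (1 - sW S θ * ch θ z) =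
      if (sW S θ * ch θ y = -1 ∧ sW S θ * ch θ z = -1) then 4 else 0 := by
    intro θ
    rw [one_sub_al, one_sub_al]
    by_cases h1 : sW S θ * ch θ y = -1 <;> by_cases h2 : sW S θ * ch θ z = -1 <;>
      simp [h1, h2]
  have hsum : ∑ θ ∈ AA S, (1 - sW S θ * ch θ y) * (1 - sW S θ * ch θ z) =
      4 * (((Dx S y) ∩ (Dx S z)).card : ℤ) := by
    rw [Finset.sum_congr rfl (fun θ _ => hpoint θ), Finset.sum_ite, Finset.sum_const,
      Finset.sum_const]
    have hff : (Dx S y) ∩ (Dx S z) =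
        (AA S).filter (fun θ => sW S θ * ch θ y = -1 ∧ sW S θ * ch θ z = -1) := by
      ext θ
      simp only [Finset.mem_inter, mem_Dx, Finset.mem_filter]
      tauto
    rw [hff]
    simp [mul_comm]
  have hexp : ∀ θ, (1 - sW S θ * ch θ y) * (1 - sW S θ * ch θ z) =
      1 - sW S θ * ch θ y - sW S θ * ch θ z + ch θ (y + z) := by
    intro θ
    rw [ch_add_right]
    have h := sW_sq (S := S) θ
    calc (1 - sW S θ * ch θ y) * (1 - sW S θ * ch θ z)
        = 1 - sW S θ * ch θ y - sW S θ * ch θ z + (sW S θ * sW S θ) * (ch θ y * ch θ z) := by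
          ring
      _ = 1 - sW S θ * ch θ y - sW S θ * ch θ z + ch θ y * ch θ z := by rw [h, one_mul]
  have hsum2 : ∑ θ ∈ AA S, (1 - sW S θ * ch θ y) * (1 - sW S θ * ch θ z) =
      ((AA S).card : ℤ) - (2^k - 2) - (2^k - 2) + RA S (y + z) := by
    rw [Finset.sum_congr rfl (fun θ _ => hexp θ)]
    simp only [Finset.sum_add_distrib, Finset.sum_sub_distrib, Finset.sum_const,
      nsmul_eq_mul, mul_one]
    rw [msum hcard hW hy, msum hcard hW hz]
    rfl
  rw [hsum2, Acard' hcard hW] at hsum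
  rw [← hsum]
  ring

def PP (S : Finset (G (k + d))) (w : G (k + d)) : Finset (G (k + d)) :=
  S.filter (fun x => x + w ∈ S)

include hcard hW in
lemma I_id (w : G (k + d)) :
    (2:ℤ)^(k+d) * ((PP S w).card : ℤ) = 2^(2*d) * (RA S w + 4) := by
  have hp := paircount (S := S) w
  rw [sum_split (S := S) (fun γ => (W S γ)^2 * ch γ w)
    (fun γ h0 hA => by show (W S γ)^2 * ch γ w = 0; rw [W_off_A h0 hA]; ring)] at hp
  rw [ch_zero_left, W0_val hcard, mul_one] at hp
  have he : ∑ γ ∈ AA S, (W S γ)^2 * ch γ w = 2^(2*d) * RA S w := by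
    unfold RA
    rw [Finset.mul_sum]
    refine Finset.sum_congr rfl fun θ hθ => ?_
    rw [W_on_A hW hθ, mul_pow]
    rcases sW_cases (S := S) θ with h | h <;> rw [h] <;> rw [← pow_mul] <;> ring
  rw [he] at hp
  have h2 : ((2:ℤ)^(d+1))^2 = 2^(2*d) * 4 := by rw [← pow_mul]; ring_nf
  rw [h2] at hp
  unfold PP
  rw [← hp]
  ring

include hk hcard hW in
lemma Cpair_card {β : G (k + d)} (hβ : β ∈ AA S) (w : G (k + d)) :
    ((CC S β).filter (fun x => x + w ∈ CC S β)).card =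
      if w ∈ KF S β then (CC S β).card else 0 := by
  split_ifs with h
  · rw [Finset.filter_true_of_mem]
    intro x hx
    have := dirF_stab (closureC hk hcard hW hβ) h hx
    exact this
  · rw [Finset.card_eq_zero, Finset.filter_eq_empty_iff]
    intro x hx hxw
    exact h (mem_dirF.2 ⟨x, hx, x + w, hxw, by rw [← add_assoc, add_self_zero, zero_add]⟩)

include hk hcard hW in
lemma RA_key {w : G (k + d)} (hw : w ≠ 0) :
    2^(k+1) * (((AA S).filter (fun β => w ∈ KF S β)).card : ℤ) = RA S w * (RA S w + 4) := by
  -- double count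
  have hdc : ∑ β ∈ AA S, (((CC S β).filter (fun x => x + w ∈ CC S β)).card : ℤ) =
      ∑ x ∈ PP S w, (((Dx S x) ∩ (Dx S (x + w))).card : ℤ) := by
    have lhs : ∀ β ∈ AA S, (((CC S β).filter (fun x => x + w ∈ CC S β)).card : ℤ) =
        ∑ x ∈ S, (if x ∈ CC S β ∧ x + w ∈ CC S β then (1:ℤ) else 0) := by
      intro β hβ
      rw [Finset.sum_ite, Finset.sum_const, Finset.sum_const]
      have : S.filter (fun x => x ∈ CC S β ∧ x + w ∈ CC S β) =
          (CC S β).filter (fun x => x + w ∈ CC S β) := by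
        ext x
        simp only [Finset.mem_filter, mem_CC]
        tauto
      rw [this]
      simp
    rw [Finset.sum_congr rfl lhs, Finset.sum_comm]
    have rhs : ∀ x ∈ S, ∑ β ∈ AA S, (if x ∈ CC S β ∧ x + w ∈ CC S β then (1:ℤ) else 0) =
        if x + w ∈ S then (((Dx S x) ∩ (Dx S (x + w))).card : ℤ) else 0 := by
      intro x hx
      split_ifs with hxw
      · rw [Finset.sum_ite, Finset.sum_const, Finset.sum_const]
        have : (AA S).filter (fun β => x ∈ CC S β ∧ x + w ∈ CC S β) =
            (Dx S x) ∩ (Dx S (x + w)) := by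
          ext β
          simp only [Finset.mem_filter, Finset.mem_inter, mem_Dx, mem_CC]
          tauto
        rw [this]
        simp
      · refine Finset.sum_eq_zero fun β hβ => ?_
        rw [if_neg]
        rintro ⟨h1, h2⟩
        exact hxw (mem_CC.1 h2).1
    rw [Finset.sum_congr rfl rhs, ← Finset.sum_filter]
    rfl
  -- evaluate both sides
  have hL : ∑ β ∈ AA S, (((CC S β).filter (fun x => x + w ∈ CC S β)).card : ℤ) * 2 =
      (((AA S).filter (fun β => w ∈ KF S β)).card : ℤ) * 2^d := by
    have : ∀ β ∈ AA S, (((CC S β).filter (fun x => x + w ∈ CC S β)).card : ℤ) * 2 =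
        if w ∈ KF S β then (2:ℤ)^d else 0 := by
      intro β hβ
      rw [Cpair_card hk hcard hW hβ w]
      split_ifs with h
      · push_cast
        have := Ccard hcard hW hβ
        linarith
      · simp
    rw [Finset.sum_congr rfl this, ← Finset.sum_filter, Finset.sum_const, nsmul_eq_mul]
  have hR : ∀ x ∈ PP S w, (((Dx S x) ∩ (Dx S (x + w))).card : ℤ) * 4 = RA S w := by
    intro x hx
    obtain ⟨hxS, hxwS⟩ := Finset.mem_filter.1 hx
    have hm := m_id hcard hW hxS hxwS
    have harg : x + (x + w) = w := by rw [← add_assoc, add_self_zero, zero_add]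
    rw [harg] at hm
    linarith
  have hRHS : (∑ x ∈ PP S w, (((Dx S x) ∩ (Dx S (x + w))).card : ℤ)) * 4 =
      ((PP S w).card : ℤ) * RA S w := by
    rw [Finset.sum_mul, Finset.sum_congr rfl hR, Finset.sum_const, nsmul_eq_mul]
  set Ssum := ∑ β ∈ AA S, (((CC S β).filter (fun x => x + w ∈ CC S β)).card : ℤ) with hSdef0
  set rr := (((AA S).filter (fun β => w ∈ KF S β)).card : ℤ) with hrrdef
  set R := RA S w with hRdef
  set P := ((PP S w).card : ℤ) with hPdef
  have e1 : Ssum * 2 = rr * 2^d := by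
    rw [hSdef0, Finset.sum_mul]
    exact hL
  have e2 : Ssum * 4 = P * R := by
    rw [hdc]
    exact hRHS

  have e3 : (2:ℤ)^(k+d) * P = 2^(2*d) * (R + 4) := I_id hcard hW w
  have e6 : (2:ℤ)^(k+d) * (Ssum * 4) = 2^(2*d) * ((R + 4) * R) := by
    rw [e2]
    calc (2:ℤ)^(k+d) * (P * R) = ((2:ℤ)^(k+d) * P) * R := by ring
      _ = (2^(2*d) * (R + 4)) * R := by rw [e3]
      _ = 2^(2*d) * ((R + 4) * R) := by ring
  have e7 : (2:ℤ)^(k+d) * (Ssum * 4) = 2^(2*d) * (2^(k+1) * rr) := by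
    calc (2:ℤ)^(k+d) * (Ssum * 4) = 2^(k+d) * ((Ssum * 2) * 2) := by ring
      _ = 2^(k+d) * ((rr * 2^d) * 2) := by rw [e1]
      _ = 2^(2*d) * (2^(k+1) * rr) := by
          rw [pow_add, pow_add, two_mul, pow_add]
          ring
  have e8 : (2:ℤ)^(2*d) * ((R + 4) * R) = 2^(2*d) * (2^(k+1) * rr) := by rw [← e6, e7]
  have e9 := mul_left_cancel₀ (show ((2:ℤ)^(2*d)) ≠ 0 by positivity) e8
  linarith

include hk hcard hW in
lemma RA_ne_4 {w : G (k + d)} (hw : w ≠ 0) : RA S w ≠ 4 := by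
  intro h4
  have hkey := RA_key hk hcard hW hw
  rw [h4] at hkey
  have h64 : (64:ℤ) ≤ 2^(k+1) := by
    calc (64:ℤ) = 2^6 := by norm_num
      _ ≤ 2^(k+1) := pow_le_pow_right₀ (by norm_num) (by omega)
  have hrr : (0:ℤ) ≤ (((AA S).filter (fun β => w ∈ KF S β)).card : ℤ) := by positivity
  rcases eq_or_lt_of_le hrr with h | h
  · rw [← h] at hkey
    simp at hkey
  · have h1 : (1:ℤ) ≤ (((AA S).filter (fun β => w ∈ KF S β)).card : ℤ) := h
    nlinarith

include hk hcard hW in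
lemma shared_two {y z : G (k + d)} (hy : y ∈ S) (hz : z ∈ S) (hyz : y ≠ z)
    (hne : ((Dx S y) ∩ (Dx S z)).Nonempty) : 2 ≤ ((Dx S y) ∩ (Dx S z)).card := by
  have hm := m_id hcard hW hy hz
  have hw : y + z ≠ 0 := fun h => hyz ((add_eq_zero_iff_eq y z).1 h)
  have h4 := RA_ne_4 hk hcard hW hw
  have h1 : 1 ≤ ((Dx S y) ∩ (Dx S z)).card := Finset.card_pos.2 hne
  by_contra hc
  push_neg at hc
  have : ((Dx S y) ∩ (Dx S z)).card = 1 := by omega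
  rw [this] at hm
  norm_num at hm
  exact h4 hm.symm

noncomputable def EE (S : Finset (G (k + d))) (x : G (k + d)) : Submodule (ZMod 2) (G (k + d)) :=
  (Dx S x).sup (fun θ => VV S θ)

include hk hcard hW in
lemma Dx_two {x : G (k + d)} (hx : x ∈ S) : ∃ θ ∈ Dx S x, ∃ θ' ∈ Dx S x, θ ≠ θ' := by
  have h8 := Dx_big hk hcard hW hx
  have h1 : 1 < (Dx S x).card := by omega
  obtain ⟨a, ha, b, hb, hab⟩ := Finset.one_lt_card.1 h1
  exact ⟨a, ha, b, hb, hab⟩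

include hk hcard hW in
lemma EE_eq_pair {x : G (k + d)} (hx : x ∈ S) {θ θ' : G (k + d)}
    (hθ : θ ∈ Dx S x) (hθ' : θ' ∈ Dx S x) (hne : θ ≠ θ') :
    EE S x = VV S θ ⊔ VV S θ' := by
  apply le_antisymm
  · exact Finset.sup_le (fun η hη => dichotomy hk hcard hW hx hθ hθ' hne η hη)
  · exact sup_le (Finset.le_sup hθ) (Finset.le_sup hθ')

include hk hcard hW in
lemma rank_EE {x : G (k + d)} (hx : x ∈ S) : Module.finrank (ZMod 2) ↥(EE S x) = d := by
  obtain ⟨θ, hθ, θ', hθ', hne⟩ := Dx_two hk hcard hW hx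
  rw [EE_eq_pair hk hcard hW hx hθ hθ' hne]
  exact rank_sup_pair hk hcard hW hx hθ hθ' hne

noncomputable def EEfin (S : Finset (G (k + d))) (x : G (k + d)) : Finset (G (k + d)) :=
  @Finset.filter _ (fun u => u ∈ EE S x) (Classical.decPred _) Finset.univ

lemma mem_EEfin {x u : G (k + d)} : u ∈ EEfin S x ↔ u ∈ EE S x := by
  simp only [EEfin, Finset.mem_filter, Finset.mem_univ, true_and]

include hk hcard hW in
lemma EEfin_card {x : G (k + d)} (hx : x ∈ S) : (EEfin S x).card = 2 ^ d := by
  have h := pow_card_of_SM (U := EE S x) (K := EEfin S x) (fun u => mem_EEfin.symm)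
  rw [h, rank_EE hk hcard hW hx]

noncomputable def boxF (S : Finset (G (k + d))) (x : G (k + d)) : Finset (G (k + d)) :=
  (EEfin S x).image (fun u => x + u)

include hk hcard hW in
lemma boxF_card {x : G (k + d)} (hx : x ∈ S) : (boxF S x).card = 2 ^ d := by
  unfold boxF
  rw [card_image_add, EEfin_card hk hcard hW hx]

lemma mem_boxF_self {x : G (k + d)} : x ∈ boxF S x := by
  refine Finset.mem_image.2 ⟨0, ?_, by rw [add_zero]⟩
  rw [mem_EEfin]
  exact zero_mem _

include hk hcard hW in
lemma CC_sub_boxF {x θ : G (k + d)} (hx : x ∈ S) (hθ : θ ∈ Dx S x) :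
    CC S θ ⊆ boxF S x := by
  intro z hz
  have hA := mem_Dx_A hk hcard hW hθ
  have hxC := mem_Dx_CC hk hcard hW hx hθ
  have hu : x + z ∈ KF S θ := by
    show x + z ∈ dirF (CC S θ)
    rw [mem_dirF_iff (closureC hk hcard hW hA) hxC]
    rw [← add_assoc, add_self_zero, zero_add]
    exact hz
  refine Finset.mem_image.2 ⟨x + z, ?_, by rw [← add_assoc, add_self_zero, zero_add]⟩
  rw [mem_EEfin]
  exact Finset.le_sup (f := fun θ => VV S θ) hθ ((mem_VV hk hcard hW hA).2 hu)

include hk hcard hW in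
lemma boxF_eq {y z θ : G (k + d)} (hy : y ∈ S) (hz : z ∈ S)
    (hθy : θ ∈ Dx S y) (hθz : θ ∈ Dx S z) : boxF S y = boxF S z := by
  by_cases hyz : y = z
  · rw [hyz]
  have hne : ((Dx S y) ∩ (Dx S z)).Nonempty := ⟨θ, Finset.mem_inter.2 ⟨hθy, hθz⟩⟩
  have h2 := shared_two hk hcard hW hy hz hyz hne
  obtain ⟨a, ha, b, hb, hab⟩ := Finset.one_lt_card.1 (by omega : 1 < ((Dx S y) ∩ (Dx S z)).card)
  have hay := (Finset.mem_inter.1 ha).1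
  have haz := (Finset.mem_inter.1 ha).2
  have hby := (Finset.mem_inter.1 hb).1
  have hbz := (Finset.mem_inter.1 hb).2
  have hE : EE S y = EE S z := by
    rw [EE_eq_pair hk hcard hW hy hay hby hab, EE_eq_pair hk hcard hW hz haz hbz hab]
  have hAa := mem_Dx_A hk hcard hW hay
  have hu : y + z ∈ KF S a := by
    show y + z ∈ dirF (CC S a)
    rw [mem_dirF_iff (closureC hk hcard hW hAa) (mem_Dx_CC hk hcard hW hy hay)]
    rw [← add_assoc, add_self_zero, zero_add]
    exact mem_Dx_CC hk hcard hW hz haz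
  have huE : y + z ∈ EE S y :=
    Finset.le_sup (f := fun θ => VV S θ) hay ((mem_VV hk hcard hW hAa).2 hu)
  have hfin : EEfin S z = EEfin S y := by
    ext u
    rw [mem_EEfin, mem_EEfin, hE]
  unfold boxF
  rw [hfin]
  ext v
  simp only [Finset.mem_image, mem_EEfin]
  constructor
  · rintro ⟨u, hu2, rfl⟩
    refine ⟨(y + z) + u, add_mem huE hu2, ?_⟩
    have : z + (y + z + u) = (z + z) + (y + u) := by abel
    rw [this, add_self_zero, zero_add]
  · rintro ⟨u, hu2, rfl⟩
    refine ⟨(y + z) + u, add_mem huE hu2, ?_⟩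
    have : y + (y + z + u) = (y + y) + (z + u) := by abel
    rw [this, add_self_zero, zero_add]

include hk hcard hW in
lemma fib_lower {x : G (k + d)} (hx : x ∈ S) :
    3 * 2^d ≤ 4 * (S.filter (fun y => boxF S y = boxF S x)).card := by
  obtain ⟨θ, hθ, θ', hθ', hne⟩ := Dx_two hk hcard hW hx
  have hsub : (CC S θ) ∪ (CC S θ') ⊆ S.filter (fun y => boxF S y = boxF S x) := by
    intro z hz
    rcases Finset.mem_union.1 hz with h | h
    · have hzS := (mem_CC.1 h).1
      have hθz : θ ∈ Dx S z := mem_Dx.2 ⟨mem_Dx_A hk hcard hW hθ, (mem_CC.1 h).2⟩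
      exact Finset.mem_filter.2 ⟨hzS, boxF_eq hk hcard hW hzS hx hθz hθ⟩
    · have hzS := (mem_CC.1 h).1
      have hθz : θ' ∈ Dx S z := mem_Dx.2 ⟨mem_Dx_A hk hcard hW hθ', (mem_CC.1 h).2⟩
      exact Finset.mem_filter.2 ⟨hzS, boxF_eq hk hcard hW hzS hx hθz hθ'⟩
  have hcu : ((CC S θ) ∪ (CC S θ')).card + ((CC S θ) ∩ (CC S θ')).card
      = (CC S θ).card + (CC S θ').card := Finset.card_union_add_card_inter _ _
  have hI : ((CC S θ) ∩ (CC S θ')).Nonempty :=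
    ⟨x, Finset.mem_inter.2 ⟨mem_Dx_CC hk hcard hW hx hθ, mem_Dx_CC hk hcard hW hx hθ'⟩⟩
  have h4 := (pair_nonempty hcard hW (mem_Dx_A hk hcard hW hθ) (mem_Dx_A hk hcard hW hθ')
    hne hI).1
  have h4' : 4 * ((CC S θ) ∩ (CC S θ')).card = 2^d := by exact_mod_cast h4
  have hc1 : 2 * (CC S θ).card = 2^d := by
    exact_mod_cast Ccard hcard hW (mem_Dx_A hk hcard hW hθ)
  have hc2 : 2 * (CC S θ').card = 2^d := by
    exact_mod_cast Ccard hcard hW (mem_Dx_A hk hcard hW hθ')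
  have hle := Finset.card_le_card hsub
  omega

include hk hcard hW in
lemma two_boxes :
    ∃ x₁, x₁ ∈ S ∧ ∃ x₂, x₂ ∈ S ∧ Disjoint (boxF S x₁) (boxF S x₂) ∧
      S = boxF S x₁ ∪ boxF S x₂ := by
  have hSne : S.Nonempty := by
    rw [← Finset.card_pos, hcard]
    positivity
  obtain ⟨x₀, hx₀⟩ := hSne
  obtain ⟨θ, hθ, θ', hθ', hneθ⟩ := Dx_two hk hcard hW hx₀
  have hI : ((CC S θ) ∩ (CC S θ')).Nonempty :=
    ⟨x₀, Finset.mem_inter.2 ⟨mem_Dx_CC hk hcard hW hx₀ hθ, mem_Dx_CC hk hcard hW hx₀ hθ'⟩⟩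
  have hd2 : 2 ≤ d := (pair_nonempty hcard hW (mem_Dx_A hk hcard hW hθ)
    (mem_Dx_A hk hcard hW hθ') hneθ hI).2
  obtain ⟨q, hq⟩ : ∃ q, 2^d = 4 * q := by
    refine ⟨2^(d-2), ?_⟩
    have he : d - 2 + 2 = d := by omega
    calc (2:ℕ)^d = 2^(d-2+2) := by rw [he]
      _ = 4 * 2^(d-2) := by rw [pow_add]; ring
  have hqpos : 1 ≤ q := by
    have : (0:ℕ) < 2^d := by positivity
    omega
  set T := S.image (fun y => boxF S y) with hTdef
  have hfibsum : S.card = ∑ b ∈ T, (S.filter (fun y => boxF S y = b)).card :=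
    Finset.card_eq_sum_card_fiberwise (fun y hy => Finset.mem_image_of_mem _ hy)
  have hlow : ∀ b ∈ T, 3 * q ≤ (S.filter (fun y => boxF S y = b)).card := by
    intro b hb
    obtain ⟨x, hx, rfl⟩ := Finset.mem_image.1 hb
    have := fib_lower hk hcard hW hx
    omega
  have hhigh : ∀ b ∈ T, (S.filter (fun y => boxF S y = b)).card ≤ 4 * q := by
    intro b hb
    obtain ⟨x, hx, rfl⟩ := Finset.mem_image.1 hb
    have hsub : S.filter (fun y => boxF S y = boxF S x) ⊆ boxF S x := by
      intro y hy
      have h2 := (Finset.mem_filter.1 hy).2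
      rw [← h2]
      exact mem_boxF_self
    have := Finset.card_le_card hsub
    have hbc := boxF_card hk hcard hW hx
    omega
  have hScard : S.card = 8 * q := by rw [hcard, pow_succ]; omega
  have h1 : T.card * (3*q) ≤ 8 * q := by
    calc T.card * (3*q) = T.card • (3*q) := by rw [smul_eq_mul]
      _ ≤ ∑ b ∈ T, (S.filter (fun y => boxF S y = b)).card :=
          Finset.card_nsmul_le_sum T _ _ hlow
      _ = 8 * q := by rw [← hfibsum, hScard]
  have h2 : 8 * q ≤ T.card * (4*q) := by
    calc (8:ℕ) * q = ∑ b ∈ T, (S.filter (fun y => boxF S y = b)).card := by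
          rw [← hfibsum, hScard]
      _ ≤ T.card • (4*q) := Finset.sum_le_card_nsmul T _ _ hhigh
      _ = T.card * (4*q) := by rw [smul_eq_mul]
  have hm2 : T.card = 2 := by
    have hle2 : T.card ≤ 2 := by
      by_contra h
      push_neg at h
      have h3 : 3 * (3*q) ≤ T.card * (3*q) := Nat.mul_le_mul_right _ h
      omega
    have hge2 : 2 ≤ T.card := by
      by_contra h
      push_neg at h
      have h3 : T.card * (4*q) ≤ 1 * (4*q) := Nat.mul_le_mul_right _ (by omega)
      omega
    omega
  obtain ⟨b₁, b₂, hb12, hTeq⟩ := Finset.card_eq_two.1 hm2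
  have hb₁T : b₁ ∈ T := by rw [hTeq]; simp
  have hb₂T : b₂ ∈ T := by rw [hTeq]; simp
  obtain ⟨x₁, hx₁, hbx₁⟩ := Finset.mem_image.1 hb₁T
  obtain ⟨x₂, hx₂, hbx₂⟩ := Finset.mem_image.1 hb₂T
  have hsum2 : (S.filter (fun y => boxF S y = b₁)).card
      + (S.filter (fun y => boxF S y = b₂)).card = 8 * q := by
    rw [← hScard, hfibsum, hTeq, Finset.sum_insert (by simpa using hb12), Finset.sum_singleton]
  have hful1 : (S.filter (fun y => boxF S y = b₁)).card = 4 * q := by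
    have := hhigh b₁ hb₁T
    have := hhigh b₂ hb₂T
    have := hlow b₁ hb₁T
    have := hlow b₂ hb₂T
    omega
  have hful2 : (S.filter (fun y => boxF S y = b₂)).card = 4 * q := by
    have := hhigh b₁ hb₁T
    have := hlow b₁ hb₁T
    omega
  have hfil1 : S.filter (fun y => boxF S y = b₁) = boxF S x₁ := by
    apply Finset.eq_of_subset_of_card_le
    · intro y hy
      have h2 := (Finset.mem_filter.1 hy).2
      rw [← hbx₁] at h2
      rw [← h2]
      exact mem_boxF_self
    · rw [hful1, boxF_card hk hcard hW hx₁]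
      omega
  have hfil2 : S.filter (fun y => boxF S y = b₂) = boxF S x₂ := by
    apply Finset.eq_of_subset_of_card_le
    · intro y hy
      have h2 := (Finset.mem_filter.1 hy).2
      rw [← hbx₂] at h2
      rw [← h2]
      exact mem_boxF_self
    · rw [hful2, boxF_card hk hcard hW hx₂]
      omega
  refine ⟨x₁, hx₁, x₂, hx₂, ?_, ?_⟩
  · rw [← hfil1, ← hfil2, Finset.disjoint_left]
    intro y hy1 hy2
    have e1 := (Finset.mem_filter.1 hy1).2
    have e2 := (Finset.mem_filter.1 hy2).2
    exact hb12 (e1 ▸ e2 ▸ rfl)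
  · rw [← hfil1, ← hfil2]
    ext y
    simp only [Finset.mem_union, Finset.mem_filter]
    constructor
    · intro hy
      have hbT : boxF S y ∈ T := Finset.mem_image_of_mem _ hy
      rw [hTeq] at hbT
      rcases Finset.mem_insert.1 hbT with h | h
      · exact Or.inl ⟨hy, h⟩
      · exact Or.inr ⟨hy, Finset.mem_singleton.1 h⟩
    · rintro (⟨hy, _⟩ | ⟨hy, _⟩) <;> exact hy

end core2

end St11

open Finset

/-- Main Lemma. -/
theorem stmt_11 {n k : ℕ} (hk : 5 ≤ k) (hn : k ≤ n) (f : (Fin n → ZMod 2) → ℝ)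
    (hf : ∀ x, f x = 0 ∨ f x = 1)
    (h0 : fc f 0 = 1 / 2 ^ (k - 1))
    (h : ∀ α : Fin n → ZMod 2, α ≠ 0 →
      fc f α = 0 ∨ fc f α = 1 / 2 ^ k ∨ fc f α = -(1 / 2 ^ k)) :
    ∃ (a b : Fin n → ZMod 2) (V W : Submodule (ZMod 2) (Fin n → ZMod 2)),
      Module.finrank (ZMod 2) V = n - k ∧ Module.finrank (ZMod 2) W = n - k ∧
      Disjoint ((a + ·) '' (V : Set (Fin n → ZMod 2)))
        ((b + ·) '' (W : Set (Fin n → ZMod 2))) ∧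
      {x | f x = 1} =
        (a + ·) '' (V : Set (Fin n → ZMod 2)) ∪ (b + ·) '' (W : Set (Fin n → ZMod 2)) := by
  classical
  obtain ⟨d, rfl⟩ : ∃ d, n = k + d := ⟨n - k, by omega⟩
  set S : Finset (St11.G (k + d)) := Finset.univ.filter (fun x => f x = 1) with hSdef
  have hmemS : ∀ x, x ∈ S ↔ f x = 1 := by
    intro x
    rw [hSdef, Finset.mem_filter]
    simp
  -- bridge to integer Walsh sums
  have hfc : ∀ α, fc f α = ((St11.W S α : ℤ) : ℝ) / 2 ^ (k + d) := by
    intro α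
    unfold fc
    congr 1
    have key : ∀ x : St11.G (k + d),
        f x * (-1 : ℝ) ^ (∑ i, α i * x i : ZMod 2).val
          = if x ∈ S then ((St11.ch α x : ℤ) : ℝ) else 0 := by
      intro x
      rcases hf x with hfx | hfx
      · rw [hfx, if_neg (fun hx => by rw [(hmemS x).1 hx] at hfx; norm_num at hfx)]
        ring
      · rw [hfx, if_pos ((hmemS x).2 hfx), one_mul]
        have hb : (∑ i, α i * x i : ZMod 2) = St11.bf α x := rfl
        rw [hb]
        unfold St11.ch
        rcases St11.zmod2_cases (St11.bf α x) with h2 | h2 <;> rw [h2] <;>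
          norm_num [ZMod.val_one]
    rw [Finset.sum_congr rfl (fun x _ => key x), Finset.sum_ite_mem, Finset.univ_inter]
    unfold St11.W
    push_cast
    rfl
  have h2n : ((2:ℝ))^(k+d) ≠ 0 := by positivity
  -- card equation
  have hcard : S.card = 2 ^ (d + 1) := by
    have h1 := h0
    rw [hfc 0, St11.W_zero] at h1
    have h2 : ((S.card : ℤ) : ℝ) * 2 ^ (k - 1) = 2 ^ (k + d) := by
      field_simp at h1
      push_cast at h1 ⊢
      linarith
    have h3 : (S.card : ℤ) * 2 ^ (k - 1) = 2 ^ (k + d) := by exact_mod_cast h2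
    have h4 : S.card * 2 ^ (k - 1) = 2 ^ (k + d) := by exact_mod_cast h3
    have h5 : (2:ℕ) ^ (k + d) = 2 ^ (d + 1) * 2 ^ (k - 1) := by
      rw [← pow_add]
      congr 1
      omega
    rw [h5] at h4
    have hp : (0:ℕ) < 2 ^ (k - 1) := by positivity
    exact Nat.eq_of_mul_eq_mul_right hp h4
  -- W values
  have hW : ∀ γ : St11.G (k + d), γ ≠ 0 →
      St11.W S γ = 0 ∨ St11.W S γ = 2 ^ d ∨ St11.W S γ = -2 ^ d := by
    intro γ hγ
    rcases h γ hγ with h1 | h1 | h1 <;> rw [hfc γ] at h1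
    · left
      have : ((St11.W S γ : ℤ) : ℝ) = 0 := by
        field_simp at h1
        exact_mod_cast h1
      exact_mod_cast this
    · right; left
      have h2 : ((St11.W S γ : ℤ) : ℝ) * 2 ^ k = 2 ^ (k + d) := by
        field_simp at h1
        push_cast at h1 ⊢
        linarith
      have h3 : (St11.W S γ) * 2 ^ k = 2 ^ (k + d) := by exact_mod_cast h2
      have h4 : ((2:ℤ) ^ d) * 2 ^ k = 2 ^ (k + d) := by rw [← pow_add]; congr 1; omega
      have hp : ((2:ℤ) ^ k) ≠ 0 := by positivity
      exact mul_right_cancel₀ hp (by rw [h3, ← h4])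
    · right; right
      have h2 : ((St11.W S γ : ℤ) : ℝ) * 2 ^ k = -2 ^ (k + d) := by
        field_simp at h1
        push_cast at h1 ⊢
        linarith
      have h3 : (St11.W S γ) * 2 ^ k = -2 ^ (k + d) := by exact_mod_cast h2
      have h4 : (-(2:ℤ) ^ d) * 2 ^ k = -2 ^ (k + d) := by
        rw [neg_mul, ← pow_add]
        congr 2
        omega
      have hp : ((2:ℤ) ^ k) ≠ 0 := by positivity
      exact mul_right_cancel₀ hp (by rw [h3, ← h4])
  -- main structure
  obtain ⟨x₁, hx₁, x₂, hx₂, hdisj, hSeq⟩ := St11.two_boxes hk hcard hW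
  refine ⟨x₁, x₂, St11.EE S x₁, St11.EE S x₂, ?_, ?_, ?_, ?_⟩
  · rw [St11.rank_EE hk hcard hW hx₁]
    omega
  · rw [St11.rank_EE hk hcard hW hx₂]
    omega
  · have hc1 : (x₁ + ·) '' ((St11.EE S x₁ : Set (St11.G (k + d)))) = ↑(St11.boxF S x₁) := by
      unfold St11.boxF
      have hset : (↑(St11.EEfin S x₁) : Set (St11.G (k + d))) = (St11.EE S x₁ : Set (St11.G (k + d))) := by
        ext u
        rw [Finset.mem_coe, St11.mem_EEfin]
        rfl
      rw [Finset.coe_image, hset]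
    have hc2 : (x₂ + ·) '' ((St11.EE S x₂ : Set (St11.G (k + d)))) = ↑(St11.boxF S x₂) := by
      unfold St11.boxF
      have hset : (↑(St11.EEfin S x₂) : Set (St11.G (k + d))) = (St11.EE S x₂ : Set (St11.G (k + d))) := by
        ext u
        rw [Finset.mem_coe, St11.mem_EEfin]
        rfl
      rw [Finset.coe_image, hset]
    rw [hc1, hc2]
    exact Finset.disjoint_coe.2 hdisj
  · have hc1 : (x₁ + ·) '' ((St11.EE S x₁ : Set (St11.G (k + d)))) = ↑(St11.boxF S x₁) := by
      unfold St11.boxF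
      have hset : (↑(St11.EEfin S x₁) : Set (St11.G (k + d))) = (St11.EE S x₁ : Set (St11.G (k + d))) := by
        ext u
        rw [Finset.mem_coe, St11.mem_EEfin]
        rfl
      rw [Finset.coe_image, hset]
    have hc2 : (x₂ + ·) '' ((St11.EE S x₂ : Set (St11.G (k + d)))) = ↑(St11.boxF S x₂) := by
      unfold St11.boxF
      have hset : (↑(St11.EEfin S x₂) : Set (St11.G (k + d))) = (St11.EE S x₂ : Set (St11.G (k + d))) := by
        ext u
        rw [Finset.mem_coe, St11.mem_EEfin]
        rfl
      rw [Finset.coe_image, hset]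
    rw [hc1, hc2]
    have hfS : {x | f x = 1} = (↑S : Set (St11.G (k + d))) := by
      ext x
      rw [Finset.mem_coe, hmemS]
      rfl
    rw [hfS]
    have h6 := congrArg (fun t : Finset (St11.G (k + d)) => (↑t : Set (St11.G (k + d)))) hSeq
    simp only [Finset.coe_union] at h6
    exact h6
end

section
/- Define f : F_2^6 → {0,1} by f(x) = 1 if and only if the Hamming weight of x is 0, 5, or 6. Then f̂(0) = 1/8, f̂(β) = −1/16 for β of weight 1 or weight 6, f̂(α) = 1/16 for α of weight 2 or weight 5, and f̂(γ) = 0 for all other γ. Moreover the support of f is a disjoint union of four affine subspaces of dimension 1, but is not the union of two disjoint affine subspaces of dimension 2. -/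
set_option maxRecDepth 100000

open Finset

/-- The Hamming weight of a vector in F_2^n. -/
def wt {n : ℕ} (x : Fin n → ZMod 2) : ℕ := (Finset.univ.filter (fun i => x i = 1)).card

def wcond (x : Fin 6 → ZMod 2) : Prop := wt x = 0 ∨ wt x = 5 ∨ wt x = 6

instance : DecidablePred wcond := fun x => by unfold wcond; infer_instance

def isum (γ : Fin 6 → ZMod 2) : ℤ :=
  ∑ x : Fin 6 → ZMod 2,
    (if wcond x then ((-1:ℤ) ^ (∑ i, γ i * x i : ZMod 2).val) else 0)

lemma fc_eq_s14 (f : (Fin 6 → ZMod 2) → ℝ)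
    (hf : ∀ x, f x = if wcond x then (1 : ℝ) else 0) (γ : Fin 6 → ZMod 2) :
    fc f γ = (isum γ : ℝ) / 64 := by
  unfold fc isum
  push_cast
  norm_num
  congr 1
  refine funext fun x => ?_
  rw [hf x]
  split_ifs <;> simp

lemma isum0 : isum 0 = 8 := by decide
lemma isum16 : ∀ γ : Fin 6 → ZMod 2, wt γ = 1 ∨ wt γ = 6 → isum γ = -4 := by decide
lemma isum25 : ∀ γ : Fin 6 → ZMod 2, wt γ = 2 ∨ wt γ = 5 → isum γ = 4 := by decide
lemma isum34 : ∀ γ : Fin 6 → ZMod 2, wt γ = 3 ∨ wt γ = 4 → isum γ = 0 := by decide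

lemma key : ∀ u w : Fin 6 → ZMod 2, wcond u → wcond w → wcond (u + w) →
    u = 0 ∨ w = 0 ∨ u = w := by decide

lemma span_image (a v : Fin 6 → ZMod 2) :
    (a + ·) '' (Submodule.span (ZMod 2) {v} : Set (Fin 6 → ZMod 2)) = {a, a + v} := by
  ext x
  simp only [Set.mem_image, SetLike.mem_coe, Submodule.mem_span_singleton,
    Set.mem_insert_iff, Set.mem_singleton_iff]
  constructor
  · rintro ⟨y, ⟨c, rfl⟩, rfl⟩
    fin_cases c
    · left; simp; exact zero_smul (ZMod 2) v
    · right; simp; exact one_smul (ZMod 2) v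
  · rintro (rfl | rfl)
    · exact ⟨0, ⟨0, by simp⟩, by simp⟩
    · exact ⟨v, ⟨1, by simp⟩, rfl⟩

lemma pairdis (a₁ v₁ a₂ v₂ : Fin 6 → ZMod 2)
    (h : ∀ x : Fin 6 → ZMod 2, (x = a₁ ∨ x = a₁ + v₁) → (x = a₂ ∨ x = a₂ + v₂) → False) :
    Disjoint ((a₁ + ·) '' (Submodule.span (ZMod 2) {v₁} : Set (Fin 6 → ZMod 2)))
      ((a₂ + ·) '' (Submodule.span (ZMod 2) {v₂} : Set (Fin 6 → ZMod 2))) := by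
  rw [Set.disjoint_left, span_image, span_image]
  intro x hx hx'
  exact h x hx hx'

lemma mem_pair (a v x : Fin 6 → ZMod 2) (h : x = a ∨ x = a + v) :
    x ∈ (a + ·) '' (Submodule.span (ZMod 2) {v} : Set (Fin 6 → ZMod 2)) := by
  rw [span_image]; exact h

lemma mem_pair' (a v x : Fin 6 → ZMod 2)
    (h : x ∈ (a + ·) '' (Submodule.span (ZMod 2) {v} : Set (Fin 6 → ZMod 2))) :
    x = a ∨ x = a + v := by
  rw [span_image] at h; exact h

lemma image_eq_of_zero_mem (a : Fin 6 → ZMod 2) (V : Submodule (ZMod 2) (Fin 6 → ZMod 2))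
    (h : (0 : Fin 6 → ZMod 2) ∈ (a + ·) '' (V : Set (Fin 6 → ZMod 2))) :
    (a + ·) '' (V : Set (Fin 6 → ZMod 2)) = (V : Set (Fin 6 → ZMod 2)) := by
  obtain ⟨v, hv, hav⟩ := h
  have ha : a ∈ V := by
    have h1 : a = -v := eq_neg_of_add_eq_zero_left hav
    have h2 : a = v := by rw [h1, CharTwo.neg_eq]
    exact h2 ▸ hv
  ext y
  constructor
  · rintro ⟨w, hw, rfl⟩; exact V.add_mem ha hw
  · intro hy
    exact ⟨y - a, V.sub_mem hy ha, by simp⟩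

lemma noSub (V : Submodule (ZMod 2) (Fin 6 → ZMod 2))
    (hV : Module.finrank (ZMod 2) V = 2)
    (hsub : (V : Set (Fin 6 → ZMod 2)) ⊆ {x | wcond x}) : False := by
  let b := Module.finBasisOfFinrankEq (ZMod 2) V hV
  have h0 : ((b 0 : V) : Fin 6 → ZMod 2) ∈ V := (b 0).2
  have h1 : ((b 1 : V) : Fin 6 → ZMod 2) ∈ V := (b 1).2
  have hc0 : wcond ((b 0 : V) : Fin 6 → ZMod 2) := hsub h0
  have hc1 : wcond ((b 1 : V) : Fin 6 → ZMod 2) := hsub h1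
  have hcs : wcond (((b 0 : V) : Fin 6 → ZMod 2) + ((b 1 : V) : Fin 6 → ZMod 2)) :=
    hsub (V.add_mem h0 h1)
  rcases key _ _ hc0 hc1 hcs with h | h | h
  · exact b.ne_zero 0 (Subtype.coe_injective (by simpa using h))
  · exact b.ne_zero 1 (Subtype.coe_injective (by simpa using h))
  · exact (b.injective.ne (by decide : (0 : Fin 2) ≠ 1)) (Subtype.coe_injective h)

lemma enumS : ∀ x : Fin 6 → ZMod 2, wcond x → (x = ![0,0,0,0,0,0] ∨ x = ![1,1,1,1,1,1] ∨
    x = ![0,1,1,1,1,1] ∨ x = ![1,0,1,1,1,1] ∨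
    x = ![1,1,0,1,1,1] ∨ x = ![1,1,1,0,1,1] ∨
    x = ![1,1,1,1,0,1] ∨ x = ![1,1,1,1,1,0]) := by decide

/-- The counterexample for k = 4. -/
theorem stmt_14 (f : (Fin 6 → ZMod 2) → ℝ)
    (hf : ∀ x, f x = if wt x = 0 ∨ wt x = 5 ∨ wt x = 6 then (1 : ℝ) else 0) :
    fc f 0 = 1 / 8 ∧
    (∀ β : Fin 6 → ZMod 2, wt β = 1 ∨ wt β = 6 → fc f β = -(1 / 16)) ∧
    (∀ α : Fin 6 → ZMod 2, wt α = 2 ∨ wt α = 5 → fc f α = 1 / 16) ∧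
    (∀ γ : Fin 6 → ZMod 2, wt γ ∉ ({0, 1, 2, 5, 6} : Set ℕ) → fc f γ = 0) ∧
    (∃ (a : Fin 4 → (Fin 6 → ZMod 2)) (V : Fin 4 → Submodule (ZMod 2) (Fin 6 → ZMod 2)),
      (∀ i, Module.finrank (ZMod 2) (V i) = 1) ∧
      (Pairwise fun i j =>
        Disjoint ((a i + ·) '' (V i : Set (Fin 6 → ZMod 2)))
          ((a j + ·) '' (V j : Set (Fin 6 → ZMod 2)))) ∧
      {x | f x = 1} = ⋃ i, (a i + ·) '' (V i : Set (Fin 6 → ZMod 2))) ∧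
    ¬ ∃ (a b : Fin 6 → ZMod 2) (V W : Submodule (ZMod 2) (Fin 6 → ZMod 2)),
        Module.finrank (ZMod 2) V = 2 ∧ Module.finrank (ZMod 2) W = 2 ∧
        Disjoint ((a + ·) '' (V : Set (Fin 6 → ZMod 2)))
          ((b + ·) '' (W : Set (Fin 6 → ZMod 2))) ∧
        {x | f x = 1} =
          (a + ·) '' (V : Set (Fin 6 → ZMod 2)) ∪ (b + ·) '' (W : Set (Fin 6 → ZMod 2)) := by
  have hf' : ∀ x, f x = if wcond x then (1 : ℝ) else 0 := hf
  have hsupp : {x | f x = 1} = {x | wcond x} := by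
    ext x
    rw [Set.mem_setOf_eq, hf' x]
    split_ifs with h <;> simp [h]
  refine ⟨?_, ?_, ?_, ?_, ?_, ?_⟩
  · rw [fc_eq_s14 f hf', isum0]; norm_num
  · intro β hβ; rw [fc_eq_s14 f hf', isum16 β hβ]; norm_num
  · intro α hα; rw [fc_eq_s14 f hf', isum25 α hα]; norm_num
  · intro γ hγ
    simp only [Set.mem_insert_iff, Set.mem_singleton_iff, not_or] at hγ
    obtain ⟨h0, h1, h2, h5, h6⟩ := hγ
    have hle : wt γ ≤ 6 := by
      have : (Finset.univ.filter (fun i => γ i = 1)).card ≤ (Finset.univ : Finset (Fin 6)).card :=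
        Finset.card_filter_le _ _
      simpa [wt] using this
    have : wt γ = 3 ∨ wt γ = 4 := by omega
    rw [fc_eq_s14 f hf', isum34 γ this]; norm_num
  · -- positive structural part
    refine ⟨![0, ![0,1,1,1,1,1], ![1,1,0,1,1,1], ![1,1,1,1,0,1]],
            ![Submodule.span (ZMod 2) {![1,1,1,1,1,1]},
              Submodule.span (ZMod 2) {![1,1,0,0,0,0]},
              Submodule.span (ZMod 2) {![0,0,1,1,0,0]},
              Submodule.span (ZMod 2) {![0,0,0,0,1,1]}], ?_, ?_, ?_⟩
    · intro i
      fin_cases i <;> exact finrank_span_singleton (by decide)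
    · intro i j hij
      fin_cases i <;> fin_cases j <;>
        first
          | exact absurd rfl hij
          | exact pairdis _ _ _ _ (by decide)
    · rw [hsupp]
      ext x
      simp only [Set.mem_iUnion, Set.mem_setOf_eq]
      constructor
      · intro hx
        have := enumS x hx
        rcases this with rfl|rfl|rfl|rfl|rfl|rfl|rfl|rfl
        · exact ⟨0, mem_pair _ _ _ (by decide)⟩
        · exact ⟨0, mem_pair _ _ _ (by decide)⟩
        · exact ⟨1, mem_pair _ _ _ (by decide)⟩
        · exact ⟨1, mem_pair _ _ _ (by decide)⟩
        · exact ⟨2, mem_pair _ _ _ (by decide)⟩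
        · exact ⟨2, mem_pair _ _ _ (by decide)⟩
        · exact ⟨3, mem_pair _ _ _ (by decide)⟩
        · exact ⟨3, mem_pair _ _ _ (by decide)⟩
      · rintro ⟨i, hi⟩
        fin_cases i <;> rcases mem_pair' _ _ _ hi with rfl | rfl <;> decide
  · rintro ⟨a, b, V, W, hV, hW, hdisj, hunion⟩
    rw [hsupp] at hunion
    have h0 : (0 : Fin 6 → ZMod 2) ∈ {x | wcond x} := by
      show wcond 0; decide
    rw [hunion] at h0
    rcases h0 with h0 | h0
    · have hVeq := image_eq_of_zero_mem a V h0
      apply noSub V hV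
      rw [← hVeq, hunion]
      exact Set.subset_union_left
    · have hWeq := image_eq_of_zero_mem b W h0
      apply noSub W hW
      rw [← hWeq, hunion]
      exact Set.subset_union_right
end
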